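/- arXiv:2410.01217 — 2 statements merged into one kernel-verified Lean document; each statement's English description precedes it below -/
import Mathlib

section
/- For any nonnegative integers a, b with a + b ≥ 1, the word 0^a 1^4 0^b is Ulam if and only if a + b ≡ 1 (mod 4). -/
def UlamN : ℕ → List Bool → Prop
  | 0, _ => False
  | n + 1, w =>
    w = [false] ∨ w = [true] ∨
      ∃! p : List Bool × List Bool,
        p.1 ≠ [] ∧ p.2 ≠ [] ∧ UlamN n p.1 ∧ UlamN n p.2 ∧ p.1 ≠ p.2 ∧ p.1 ++ p.2 = w

def IsUlam (w : List Bool) : Prop := UlamN w.length w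

def binVal (w : List Bool) : ℕ := w.foldl (fun acc b => 2 * acc + b.toNat) 0

lemma ulamN_nil (n : ℕ) : ¬ UlamN n [] := by
  cases n with
  | zero => simp [UlamN]
  | succ n =>
    simp only [UlamN]
    rintro (h | h | ⟨⟨u, v⟩, ⟨hu, hv, _, _, _, huv⟩, -⟩)
    · simp at h
    · simp at h
    · exact hu (List.append_eq_nil_iff.mp huv).1

lemma ulamN_stable_aux : ∀ L : ℕ, ∀ w : List Bool, w.length ≤ L →
    ∀ m n : ℕ, w.length ≤ m → w.length ≤ n → (UlamN m w ↔ UlamN n w) := by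
  intro L
  induction L with
  | zero =>
    intro w hw m n _ _
    have : w = [] := List.length_eq_zero_iff.mp (Nat.le_zero.mp hw)
    subst this
    simp [ulamN_nil]
  | succ L ih =>
    intro w hw m n hm hn
    by_cases hwnil : w = []
    · subst hwnil; simp [ulamN_nil]
    · have hw1 : 1 ≤ w.length := List.length_pos_iff.mpr hwnil
      obtain ⟨m', rfl⟩ : ∃ m', m = m' + 1 := ⟨m - 1, by omega⟩
      obtain ⟨n', rfl⟩ : ∃ n', n = n' + 1 := ⟨n - 1, by omega⟩
      simp only [UlamN]
      refine or_congr Iff.rfl (or_congr Iff.rfl (existsUnique_congr fun p => ?_))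
      by_cases h : p.1 ≠ [] ∧ p.2 ≠ [] ∧ p.1 ++ p.2 = w
      · obtain ⟨h1, h2, h3⟩ := h
        have hlen : p.1.length + p.2.length = w.length := by
          rw [← h3]; simp
        have hp1 : 0 < p.1.length := List.length_pos_iff.mpr h1
        have hp2 : 0 < p.2.length := List.length_pos_iff.mpr h2
        have i1 : UlamN m' p.1 ↔ UlamN n' p.1 :=
          ih p.1 (by omega) m' n' (by omega) (by omega)
        have i2 : UlamN m' p.2 ↔ UlamN n' p.2 :=
          ih p.2 (by omega) m' n' (by omega) (by omega)
        tauto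
      · tauto

lemma ulamN_iff_isUlam {n : ℕ} {w : List Bool} (h : w.length ≤ n) :
    UlamN n w ↔ IsUlam w :=
  ulamN_stable_aux n w h n w.length h le_rfl

/-- A split position is valid. -/
def Valid (w : List Bool) (i : ℕ) : Prop :=
  IsUlam (w.take i) ∧ IsUlam (w.drop i) ∧ w.take i ≠ w.drop i

lemma isUlam_iff_splits (w : List Bool) (hw : 2 ≤ w.length) :
    IsUlam w ↔ ∃! i : ℕ, 0 < i ∧ i < w.length ∧ Valid w i := by
  obtain ⟨L, hL⟩ : ∃ L, w.length = L + 1 := ⟨w.length - 1, by omega⟩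
  rw [IsUlam, hL]
  simp only [UlamN]
  have hne1 : w ≠ [false] := by intro h; rw [h] at hw; simp at hw
  have hne2 : w ≠ [true] := by intro h; rw [h] at hw; simp at hw
  simp only [hne1, hne2, false_or]
  constructor
  · rintro ⟨⟨u, v⟩, ⟨h1, h2, h3, h4, h5, h6⟩, hu⟩
    simp only at h1 h2 h3 h4 h5 h6
    have hlen : u.length + v.length = w.length := by rw [← h6]; simp
    have hu1 : 0 < u.length := List.length_pos_iff.mpr h1
    have hv1 : 0 < v.length := List.length_pos_iff.mpr h2
    have htake : w.take u.length = u := by rw [← h6]; exact List.take_left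
    have hdrop : w.drop u.length = v := by rw [← h6]; exact List.drop_left
    refine ⟨u.length, ⟨by omega, by omega, ?_, ?_, ?_⟩, ?_⟩
    · rw [htake]; exact (ulamN_iff_isUlam (by omega)).mp h3
    · rw [hdrop]; exact (ulamN_iff_isUlam (by omega)).mp h4
    · rw [htake, hdrop]; exact h5
    · rintro j ⟨hj1, hj2, hj3, hj4, hj5⟩
      have hjlen : (w.take j).length = j := by simp; omega
      have hpair := hu (w.take j, w.drop j) ⟨?_, ?_, ?_, ?_, hj5, by simp⟩
      · have e1 : w.take j = u := congrArg Prod.fst hpair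
        rw [← e1]
        exact hjlen.symm
      · apply List.ne_nil_of_length_pos; simp; omega
      · apply List.ne_nil_of_length_pos; simp; omega
      · exact (ulamN_iff_isUlam (by simp; omega)).mpr hj3
      · exact (ulamN_iff_isUlam (by simp; omega)).mpr hj4
  · rintro ⟨i, ⟨hi1, hi2, hi3, hi4, hi5⟩, hu⟩
    refine ⟨(w.take i, w.drop i), ⟨?_, ?_, ?_, ?_, hi5, by simp⟩, ?_⟩
    · apply List.ne_nil_of_length_pos; simp; omega
    · apply List.ne_nil_of_length_pos; simp; omega
    · exact (ulamN_iff_isUlam (by simp; omega)).mpr hi3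
    · exact (ulamN_iff_isUlam (by simp; omega)).mpr hi4
    · rintro ⟨u, v⟩ ⟨h1, h2, h3, h4, h5, h6⟩
      simp only at h1 h2 h3 h4 h5 h6
      have hlen : u.length + v.length = w.length := by rw [← h6]; simp
      have hu1 : 0 < u.length := List.length_pos_iff.mpr h1
      have hv1 : 0 < v.length := List.length_pos_iff.mpr h2
      have htake : w.take u.length = u := by rw [← h6]; exact List.take_left
      have hdrop : w.drop u.length = v := by rw [← h6]; exact List.drop_left
      have heq : u.length = i := by
        apply hu
        refine ⟨by omega, by omega, ?_, ?_, ?_⟩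
        · rw [htake]; exact (ulamN_iff_isUlam (by omega)).mp h3
        · rw [hdrop]; exact (ulamN_iff_isUlam (by omega)).mp h4
        · rw [htake, hdrop]; exact h5
      rw [Prod.mk.injEq, ← htake, ← hdrop, heq]
      exact ⟨rfl, rfl⟩

/-! ### The word family `0^a 1^k 0^b` -/

def Wd (a k b : ℕ) : List Bool :=
  List.replicate a false ++ (List.replicate k true ++ List.replicate b false)

lemma Wd_length (a k b : ℕ) : (Wd a k b).length = a + k + b := by
  simp [Wd]; omega

lemma Wd_zero (a : ℕ) : Wd a 0 0 = List.replicate a false := by simp [Wd]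

lemma Wd_take_left {s a : ℕ} (k b : ℕ) (h : s ≤ a) :
    (Wd a k b).take s = List.replicate s false := by
  rw [Wd, List.take_append_of_le_length (by simpa using h), List.take_replicate]
  congr 1; omega

lemma Wd_drop_left {s a : ℕ} (k b : ℕ) (h : s ≤ a) :
    (Wd a k b).drop s = Wd (a - s) k b := by
  rw [Wd, List.drop_append_of_le_length (by simpa using h), List.drop_replicate, Wd]

lemma Wd_take_mid {j k : ℕ} (a b : ℕ) (h : j ≤ k) :
    (Wd a k b).take (a + j) = Wd a j 0 := by
  rw [Wd, show a + j = (List.replicate a false).length + j by simp, List.take_append,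
    List.take_append_of_le_length (by simpa using h), List.take_replicate, Wd]
  simp [Nat.min_eq_left h]

lemma Wd_drop_mid {j k : ℕ} (a b : ℕ) (h : j ≤ k) :
    (Wd a k b).drop (a + j) = Wd 0 (k - j) b := by
  rw [Wd, show a + j = (List.replicate a false).length + j by simp, List.drop_append,
    List.drop_append_of_le_length (by simpa using h), List.drop_replicate, Wd]
  simp

lemma Wd_take_right {j b : ℕ} (a k : ℕ) (h : j ≤ b) :
    (Wd a k b).take (a + k + j) = Wd a k j := by
  rw [Wd, show a + k + j = (List.replicate a false).length + (k + j) by simp; omega,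
    List.take_length_add_append, show k + j = (List.replicate k true).length + j by simp,
    List.take_length_add_append, List.take_replicate, Wd, Nat.min_eq_left h]

lemma Wd_drop_right {j b : ℕ} (a k : ℕ) (h : j ≤ b) :
    (Wd a k b).drop (a + k + j) = List.replicate (b - j) false := by
  rw [Wd, show a + k + j = (List.replicate a false).length + (k + j) by simp; omega,
    List.drop_length_add_append, show k + j = (List.replicate k true).length + j by simp,
    List.drop_length_add_append, List.drop_replicate]

lemma Wd_count (a k b : ℕ) : (Wd a k b).count true = k := by
  simp [Wd, List.count_append, List.count_replicate]

lemma Wd_ne_count {a k b c k' d : ℕ} (h : k ≠ k') : Wd a k b ≠ Wd c k' d := by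
  intro he
  apply h
  rw [← Wd_count a k b, he, Wd_count]

lemma rep_ne_Wd (s : ℕ) {c k d : ℕ} (h : 1 ≤ k) : List.replicate s false ≠ Wd c k d := by
  rw [← Wd_zero]
  exact Wd_ne_count (by omega)

lemma Wd_ne_head {a j b j' d : ℕ} (ha : 1 ≤ a) (hj : 1 ≤ j') : Wd a j b ≠ Wd 0 j' d := by
  obtain ⟨a', rfl⟩ : ∃ a', a = a' + 1 := ⟨a - 1, by omega⟩
  obtain ⟨m, rfl⟩ : ∃ m, j' = m + 1 := ⟨j' - 1, by omega⟩
  simp [Wd, List.replicate_succ]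

lemma Wd_ne_len {a k b c k' d : ℕ} (h : a + k + b ≠ c + k' + d) : Wd a k b ≠ Wd c k' d := by
  intro he
  apply h
  rw [← Wd_length a k b, he, Wd_length]
lemma existsUnique_five {P : ℕ → Prop} {p₁ p₂ p₃ p₄ p₅ : ℕ} {C₁ C₂ C₃ C₄ C₅ : Prop}
    (hP : ∀ s, P s ↔ (s = p₁ ∧ C₁) ∨ (s = p₂ ∧ C₂) ∨ (s = p₃ ∧ C₃) ∨ (s = p₄ ∧ C₄) ∨ (s = p₅ ∧ C₅))
    (h12 : C₁ → C₂ → p₁ ≠ p₂) (h13 : C₁ → C₃ → p₁ ≠ p₃) (h14 : C₁ → C₄ → p₁ ≠ p₄)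
    (h15 : C₁ → C₅ → p₁ ≠ p₅) (h23 : C₂ → C₃ → p₂ ≠ p₃) (h24 : C₂ → C₄ → p₂ ≠ p₄)
    (h25 : C₂ → C₅ → p₂ ≠ p₅) (h34 : C₃ → C₄ → p₃ ≠ p₄) (h35 : C₃ → C₅ → p₃ ≠ p₅)
    (h45 : C₄ → C₅ → p₄ ≠ p₅) :
    (∃! s, P s) ↔
      (C₁ ∧ ¬C₂ ∧ ¬C₃ ∧ ¬C₄ ∧ ¬C₅) ∨ (¬C₁ ∧ C₂ ∧ ¬C₃ ∧ ¬C₄ ∧ ¬C₅) ∨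
      (¬C₁ ∧ ¬C₂ ∧ C₃ ∧ ¬C₄ ∧ ¬C₅) ∨ (¬C₁ ∧ ¬C₂ ∧ ¬C₃ ∧ C₄ ∧ ¬C₅) ∨
      (¬C₁ ∧ ¬C₂ ∧ ¬C₃ ∧ ¬C₄ ∧ C₅) := by
  constructor
  · rintro ⟨s, hs, hu⟩
    have k1 : C₁ → p₁ = s := fun hc => hu p₁ ((hP p₁).mpr (Or.inl ⟨rfl, hc⟩))
    have k2 : C₂ → p₂ = s := fun hc => hu p₂ ((hP p₂).mpr (Or.inr (Or.inl ⟨rfl, hc⟩)))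
    have k3 : C₃ → p₃ = s := fun hc => hu p₃ ((hP p₃).mpr (Or.inr (Or.inr (Or.inl ⟨rfl, hc⟩))))
    have k4 : C₄ → p₄ = s := fun hc => hu p₄ ((hP p₄).mpr (Or.inr (Or.inr (Or.inr (Or.inl ⟨rfl, hc⟩)))))
    have k5 : C₅ → p₅ = s := fun hc => hu p₅ ((hP p₅).mpr (Or.inr (Or.inr (Or.inr (Or.inr ⟨rfl, hc⟩)))))
    rw [hP] at hs
    rcases hs with ⟨he, hc⟩ | ⟨he, hc⟩ | ⟨he, hc⟩ | ⟨he, hc⟩ | ⟨he, hc⟩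
    · exact Or.inl ⟨hc, fun hx => h12 hc hx ((k1 hc).trans (k2 hx).symm), fun hx => h13 hc hx ((k1 hc).trans (k3 hx).symm), fun hx => h14 hc hx ((k1 hc).trans (k4 hx).symm), fun hx => h15 hc hx ((k1 hc).trans (k5 hx).symm)⟩
    · exact Or.inr (Or.inl ⟨fun hx => h12 hx hc ((k2 hc).trans (k1 hx).symm).symm, hc, fun hx => h23 hc hx ((k2 hc).trans (k3 hx).symm), fun hx => h24 hc hx ((k2 hc).trans (k4 hx).symm), fun hx => h25 hc hx ((k2 hc).trans (k5 hx).symm)⟩)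
    · exact Or.inr (Or.inr (Or.inl ⟨fun hx => h13 hx hc ((k3 hc).trans (k1 hx).symm).symm, fun hx => h23 hx hc ((k3 hc).trans (k2 hx).symm).symm, hc, fun hx => h34 hc hx ((k3 hc).trans (k4 hx).symm), fun hx => h35 hc hx ((k3 hc).trans (k5 hx).symm)⟩))
    · exact Or.inr (Or.inr (Or.inr (Or.inl ⟨fun hx => h14 hx hc ((k4 hc).trans (k1 hx).symm).symm, fun hx => h24 hx hc ((k4 hc).trans (k2 hx).symm).symm, fun hx => h34 hx hc ((k4 hc).trans (k3 hx).symm).symm, hc, fun hx => h45 hc hx ((k4 hc).trans (k5 hx).symm)⟩)))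
    · exact Or.inr (Or.inr (Or.inr (Or.inr ⟨fun hx => h15 hx hc ((k5 hc).trans (k1 hx).symm).symm, fun hx => h25 hx hc ((k5 hc).trans (k2 hx).symm).symm, fun hx => h35 hx hc ((k5 hc).trans (k3 hx).symm).symm, fun hx => h45 hx hc ((k5 hc).trans (k4 hx).symm).symm, hc⟩)))
  · rintro (⟨c1, c2, c3, c4, c5⟩ | ⟨c1, c2, c3, c4, c5⟩ | ⟨c1, c2, c3, c4, c5⟩ | ⟨c1, c2, c3, c4, c5⟩ | ⟨c1, c2, c3, c4, c5⟩)
    · refine ⟨p₁, (hP p₁).mpr (Or.inl ⟨rfl, c1⟩), ?_⟩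
      intro t ht
      rw [hP] at ht
      rcases ht with ⟨he, hc⟩ | ⟨he, hc⟩ | ⟨he, hc⟩ | ⟨he, hc⟩ | ⟨he, hc⟩
      · exact he
      · exact absurd hc c2
      · exact absurd hc c3
      · exact absurd hc c4
      · exact absurd hc c5
    · refine ⟨p₂, (hP p₂).mpr (Or.inr (Or.inl ⟨rfl, c2⟩)), ?_⟩
      intro t ht
      rw [hP] at ht
      rcases ht with ⟨he, hc⟩ | ⟨he, hc⟩ | ⟨he, hc⟩ | ⟨he, hc⟩ | ⟨he, hc⟩
      · exact absurd hc c1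
      · exact he
      · exact absurd hc c3
      · exact absurd hc c4
      · exact absurd hc c5
    · refine ⟨p₃, (hP p₃).mpr (Or.inr (Or.inr (Or.inl ⟨rfl, c3⟩))), ?_⟩
      intro t ht
      rw [hP] at ht
      rcases ht with ⟨he, hc⟩ | ⟨he, hc⟩ | ⟨he, hc⟩ | ⟨he, hc⟩ | ⟨he, hc⟩
      · exact absurd hc c1
      · exact absurd hc c2
      · exact he
      · exact absurd hc c4
      · exact absurd hc c5
    · refine ⟨p₄, (hP p₄).mpr (Or.inr (Or.inr (Or.inr (Or.inl ⟨rfl, c4⟩)))), ?_⟩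
      intro t ht
      rw [hP] at ht
      rcases ht with ⟨he, hc⟩ | ⟨he, hc⟩ | ⟨he, hc⟩ | ⟨he, hc⟩ | ⟨he, hc⟩
      · exact absurd hc c1
      · exact absurd hc c2
      · exact absurd hc c3
      · exact he
      · exact absurd hc c5
    · refine ⟨p₅, (hP p₅).mpr (Or.inr (Or.inr (Or.inr (Or.inr ⟨rfl, c5⟩)))), ?_⟩
      intro t ht
      rw [hP] at ht
      rcases ht with ⟨he, hc⟩ | ⟨he, hc⟩ | ⟨he, hc⟩ | ⟨he, hc⟩ | ⟨he, hc⟩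
      · exact absurd hc c1
      · exact absurd hc c2
      · exact absurd hc c3
      · exact absurd hc c4
      · exact he

lemma isUlam_single (x : Bool) : IsUlam [x] := by
  cases x <;> simp [IsUlam, UlamN]

lemma isUlam_rep_false : ∀ a : ℕ, IsUlam (List.replicate a false) ↔ a = 1 := by
  intro a
  induction a using Nat.strong_induction_on with
  | _ a ih =>
    rcases a with _ | _ | n
    · simpa [IsUlam] using ulamN_nil 0
    · simpa using isUlam_single false
    · constructor
      · intro hU
        exfalso
        rw [← Wd_zero, isUlam_iff_splits _ (by rw [Wd_length]; omega)] at hU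
        obtain ⟨i, ⟨hi1, hi2, hv1, hv2, hv3⟩, -⟩ := hU
        rw [Wd_length] at hi2
        rw [Wd_take_left _ _ (by omega)] at hv1 hv3
        rw [Wd_drop_left _ _ (by omega), Wd_zero] at hv2 hv3
        have e1 : i = 1 := (ih i (by omega)).mp hv1
        have e2 : n + 2 - i = 1 := (ih (n + 2 - i) (by omega)).mp hv2
        apply hv3
        rw [e1, show n + 1 + 1 - 1 = 1 by omega]
      · intro h
        exact absurd h (by omega)

/-- Characterization of valid split positions of `0^a 1^k 0^b`. -/
lemma valid_char (a k b s : ℕ) (hk : 1 ≤ k) :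
    (0 < s ∧ s < a + k + b ∧ Valid (Wd a k b) s) ↔
      (s = 1 ∧ 1 ≤ a ∧ IsUlam (Wd (a - 1) k b)) ∨
      (∃ j, s = a + j ∧ 0 < j ∧ j < k ∧ IsUlam (Wd a j 0) ∧ IsUlam (Wd 0 (k - j) b) ∧
        Wd a j 0 ≠ Wd 0 (k - j) b) ∨
      (s = a + k + b - 1 ∧ 1 ≤ b ∧ IsUlam (Wd a k (b - 1))) := by
  constructor
  · rintro ⟨h0, hL, v1, v2, v3⟩
    by_cases hsa : s ≤ a
    · left
      rw [Wd_take_left k b hsa] at v1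
      have hs1 : s = 1 := (isUlam_rep_false s).mp v1
      rw [Wd_drop_left k b hsa, hs1] at v2
      exact ⟨hs1, by omega, v2⟩
    · by_cases hsk : s < a + k
      · right; left
        rw [show s = a + (s - a) by omega, Wd_take_mid a b (by omega)] at v1 v3
        rw [show s = a + (s - a) by omega, Wd_drop_mid a b (by omega)] at v2 v3
        simp only [Nat.add_sub_cancel_left] at v1 v2 v3
        exact ⟨s - a, by omega, by omega, by omega, v1, v2, v3⟩
      · right; right
        rw [show s = a + k + (s - a - k) by omega, Wd_drop_right a k (by omega : s - a - k ≤ b)] at v2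
        have hb1 : b - (s - a - k) = 1 := (isUlam_rep_false _).mp v2
        rw [show s = a + k + (s - a - k) by omega, Wd_take_right a k (by omega : s - a - k ≤ b),
          show s - a - k = b - 1 by omega] at v1
        exact ⟨by omega, by omega, v1⟩
  · rintro (⟨rfl, ha, hU⟩ | ⟨j, rfl, hj0, hjk, hU1, hU2, hne⟩ | ⟨rfl, hb, hU⟩)
    · refine ⟨by omega, by omega, ?_, ?_, ?_⟩
      · rw [Wd_take_left k b ha]
        exact (isUlam_rep_false 1).mpr rfl
      · rw [Wd_drop_left k b ha]
        exact hU
      · rw [Wd_take_left k b ha, Wd_drop_left k b ha]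
        exact rep_ne_Wd 1 hk
    · refine ⟨by omega, by omega, ?_, ?_, ?_⟩
      · rw [Wd_take_mid a b (by omega)]
        exact hU1
      · rw [Wd_drop_mid a b (by omega)]
        exact hU2
      · rw [Wd_take_mid a b (by omega), Wd_drop_mid a b (by omega)]
        exact hne
    · refine ⟨by omega, by omega, ?_, ?_, ?_⟩
      · rw [show a + k + b - 1 = a + k + (b - 1) by omega,
          Wd_take_right a k (by omega : b - 1 ≤ b)]
        exact hU
      · rw [show a + k + b - 1 = a + k + (b - 1) by omega,
          Wd_drop_right a k (by omega : b - 1 ≤ b), show b - (b - 1) = 1 by omega]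
        exact (isUlam_rep_false 1).mpr rfl
      · rw [show a + k + b - 1 = a + k + (b - 1) by omega,
          Wd_take_right a k (by omega : b - 1 ≤ b),
          Wd_drop_right a k (by omega : b - 1 ≤ b), show b - (b - 1) = 1 by omega]
        exact (rep_ne_Wd 1 hk).symm

lemma isUlam_Wd_iff (a k b : ℕ) (h : 2 ≤ a + k + b) :
    IsUlam (Wd a k b) ↔ ∃! s, 0 < s ∧ s < a + k + b ∧ Valid (Wd a k b) s := by
  rw [isUlam_iff_splits _ (by rw [Wd_length]; omega)]
  simp only [Wd_length]

lemma isUlam_W10 : ∀ a, IsUlam (Wd a 1 0) := by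
  intro a
  induction a with
  | zero => exact isUlam_single true
  | succ n ih =>
    rw [isUlam_Wd_iff (n + 1) 1 0 (by omega)]
    refine ⟨1, (valid_char (n + 1) 1 0 1 (by omega)).mpr
      (Or.inl ⟨rfl, by omega, by simpa using ih⟩), ?_⟩
    intro t ht
    rcases (valid_char (n + 1) 1 0 t (by omega)).mp ht with
      ⟨rfl, -, -⟩ | ⟨j, rfl, hj0, hjk, -⟩ | ⟨-, hb, -⟩
    · rfl
    · omega
    · omega

lemma isUlam_W01 : ∀ b, IsUlam (Wd 0 1 b) := by
  intro b
  induction b with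
  | zero => exact isUlam_single true
  | succ n ih =>
    rw [isUlam_Wd_iff 0 1 (n + 1) (by omega)]
    refine ⟨0 + 1 + (n + 1) - 1, (valid_char 0 1 (n + 1) _ (by omega)).mpr
      (Or.inr (Or.inr ⟨rfl, by omega, by simpa using ih⟩)), ?_⟩
    intro t ht
    rcases (valid_char 0 1 (n + 1) t (by omega)).mp ht with
      ⟨-, ha, -⟩ | ⟨j, rfl, hj0, hjk, -⟩ | ⟨rfl, -, -⟩
    · omega
    · omega
    · rfl

lemma char_W20 : ∀ a, IsUlam (Wd a 2 0) ↔ a % 2 = 1 := by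
  intro a
  induction a with
  | zero =>
    rw [isUlam_Wd_iff 0 2 0 (by omega)]
    constructor
    · rintro ⟨s, hs, -⟩
      rcases (valid_char 0 2 0 s (by omega)).mp hs with
        ⟨-, h, -⟩ | ⟨j, rfl, hj0, hjk, -, -, hne⟩ | ⟨-, h, -⟩
      · omega
      · have : j = 1 := by omega
        subst this
        exact absurd rfl hne
      · omega
    · intro h
      exact absurd h (by omega)
  | succ n ih =>
    rw [isUlam_Wd_iff (n + 1) 2 0 (by omega)]
    have hP : ∀ s, (0 < s ∧ s < n + 1 + 2 + 0 ∧ Valid (Wd (n + 1) 2 0) s) ↔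
        ((s = 1 ∧ IsUlam (Wd n 2 0)) ∨ (s = n + 2 ∧ True) ∨ (s = 0 ∧ False) ∨
          (s = 0 ∧ False) ∨ (s = 0 ∧ False)) := by
      intro s
      rw [valid_char (n + 1) 2 0 s (by omega)]
      constructor
      · rintro (⟨rfl, -, hU⟩ | ⟨j, rfl, hj0, hjk, -, -, -⟩ | ⟨-, hb, -⟩)
        · exact Or.inl ⟨rfl, by simpa using hU⟩
        · exact Or.inr (Or.inl ⟨by omega, trivial⟩)
        · omega
      · rintro (⟨rfl, hU⟩ | ⟨rfl, -⟩ | ⟨-, h⟩ | ⟨-, h⟩ | ⟨-, h⟩)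
        · exact Or.inl ⟨rfl, by omega, by simpa using hU⟩
        · refine Or.inr (Or.inl ⟨1, by omega, by omega, by omega, isUlam_W10 _, ?_, ?_⟩)
          · exact isUlam_W01 0
          · exact Wd_ne_head (by omega) (by omega)
        · exact h.elim
        · exact h.elim
        · exact h.elim
    rw [existsUnique_five hP (fun _ _ => by omega) (fun _ h => h.elim) (fun _ h => h.elim)
      (fun _ h => h.elim) (fun _ h => h.elim) (fun _ h => h.elim) (fun _ h => h.elim)
      (fun h _ => h.elim) (fun h _ => h.elim) (fun h _ => h.elim)]
    simp only [ih, not_true, not_false_iff, true_and, and_true, false_and, and_false, or_false, false_or]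
    omega

lemma char_W02 : ∀ b, IsUlam (Wd 0 2 b) ↔ b % 2 = 1 := by
  intro b
  induction b with
  | zero => exact char_W20 0
  | succ n ih =>
    rw [isUlam_Wd_iff 0 2 (n + 1) (by omega)]
    have hP : ∀ s, (0 < s ∧ s < 0 + 2 + (n + 1) ∧ Valid (Wd 0 2 (n + 1)) s) ↔
        ((s = 1 ∧ True) ∨ (s = n + 2 ∧ IsUlam (Wd 0 2 n)) ∨ (s = 0 ∧ False) ∨
          (s = 0 ∧ False) ∨ (s = 0 ∧ False)) := by
      intro s
      rw [valid_char 0 2 (n + 1) s (by omega)]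
      constructor
      · rintro (⟨-, ha, -⟩ | ⟨j, rfl, hj0, hjk, -, -, -⟩ | ⟨rfl, -, hU⟩)
        · omega
        · exact Or.inl ⟨by omega, trivial⟩
        · exact Or.inr (Or.inl ⟨by omega, by simpa using hU⟩)
      · rintro (⟨rfl, -⟩ | ⟨rfl, hU⟩ | ⟨-, h⟩ | ⟨-, h⟩ | ⟨-, h⟩)
        · refine Or.inr (Or.inl ⟨1, by omega, by omega, by omega, isUlam_W01 0, ?_, ?_⟩)
          · exact isUlam_W01 (n + 1)
          · exact Wd_ne_len (by omega)
        · exact Or.inr (Or.inr ⟨by omega, by omega, by simpa using hU⟩)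
        · exact h.elim
        · exact h.elim
        · exact h.elim
    rw [existsUnique_five hP (fun _ _ => by omega) (fun _ h => h.elim) (fun _ h => h.elim)
      (fun _ h => h.elim) (fun _ h => h.elim) (fun _ h => h.elim) (fun _ h => h.elim)
      (fun h _ => h.elim) (fun h _ => h.elim) (fun h _ => h.elim)]
    simp only [ih, not_true, not_false_iff, true_and, and_true, false_and, and_false, or_false, false_or]
    omega

lemma char_W30 : ∀ a, IsUlam (Wd a 3 0) ↔ (a % 4 = 1 ∨ a % 4 = 2) := by
  intro a
  induction a with
  | zero =>
    rw [isUlam_Wd_iff 0 3 0 (by omega)]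
    constructor
    · rintro ⟨s, hs, -⟩
      rcases (valid_char 0 3 0 s (by omega)).mp hs with
        ⟨-, h, -⟩ | ⟨j, rfl, hj0, hjk, hU1, hU2, -⟩ | ⟨-, h, -⟩
      · omega
      · have : j = 1 ∨ j = 2 := by omega
        rcases this with rfl | rfl
        · have := (char_W20 0).mp (by simpa using hU2)
          omega
        · have := (char_W20 0).mp hU1
          omega
      · omega
    · intro h
      exact absurd h (by omega)
  | succ n ih =>
    rw [isUlam_Wd_iff (n + 1) 3 0 (by omega)]
    have hP : ∀ s, (0 < s ∧ s < n + 1 + 3 + 0 ∧ Valid (Wd (n + 1) 3 0) s) ↔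
        ((s = 1 ∧ IsUlam (Wd n 3 0)) ∨ (s = n + 3 ∧ (n + 1) % 2 = 1) ∨ (s = 0 ∧ False) ∨
          (s = 0 ∧ False) ∨ (s = 0 ∧ False)) := by
      intro s
      rw [valid_char (n + 1) 3 0 s (by omega)]
      constructor
      · rintro (⟨rfl, -, hU⟩ | ⟨j, rfl, hj0, hjk, hU1, hU2, -⟩ | ⟨-, hb, -⟩)
        · exact Or.inl ⟨rfl, by simpa using hU⟩
        · have : j = 1 ∨ j = 2 := by omega
          rcases this with rfl | rfl
          · have := (char_W20 0).mp (by simpa using hU2)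
            omega
          · exact Or.inr (Or.inl ⟨by omega, (char_W20 (n + 1)).mp hU1⟩)
        · omega
      · rintro (⟨rfl, hU⟩ | ⟨rfl, h⟩ | ⟨-, h⟩ | ⟨-, h⟩ | ⟨-, h⟩)
        · exact Or.inl ⟨rfl, by omega, by simpa using hU⟩
        · refine Or.inr (Or.inl ⟨2, by omega, by omega, by omega,
            (char_W20 (n + 1)).mpr h, by simpa using isUlam_W01 0, Wd_ne_count (by omega)⟩)
        · exact h.elim
        · exact h.elim
        · exact h.elim
    rw [existsUnique_five hP (fun _ _ => by omega) (fun _ h => h.elim) (fun _ h => h.elim)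
      (fun _ h => h.elim) (fun _ h => h.elim) (fun _ h => h.elim) (fun _ h => h.elim)
      (fun h _ => h.elim) (fun h _ => h.elim) (fun h _ => h.elim)]
    simp only [ih, not_true, not_false_iff, true_and, and_true, false_and, and_false, or_false,
      false_or]
    omega

lemma char_W03 : ∀ b, IsUlam (Wd 0 3 b) ↔ (b % 4 = 1 ∨ b % 4 = 2) := by
  intro b
  induction b with
  | zero => exact char_W30 0
  | succ n ih =>
    rw [isUlam_Wd_iff 0 3 (n + 1) (by omega)]
    have hP : ∀ s, (0 < s ∧ s < 0 + 3 + (n + 1) ∧ Valid (Wd 0 3 (n + 1)) s) ↔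
        ((s = 1 ∧ (n + 1) % 2 = 1) ∨ (s = n + 3 ∧ IsUlam (Wd 0 3 n)) ∨ (s = 0 ∧ False) ∨
          (s = 0 ∧ False) ∨ (s = 0 ∧ False)) := by
      intro s
      rw [valid_char 0 3 (n + 1) s (by omega)]
      constructor
      · rintro (⟨-, ha, -⟩ | ⟨j, rfl, hj0, hjk, hU1, hU2, -⟩ | ⟨rfl, -, hU⟩)
        · omega
        · have : j = 1 ∨ j = 2 := by omega
          rcases this with rfl | rfl
          · exact Or.inl ⟨by omega, (char_W02 (n + 1)).mp (by simpa using hU2)⟩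
          · have := (char_W20 0).mp hU1
            omega
        · exact Or.inr (Or.inl ⟨by omega, by simpa using hU⟩)
      · rintro (⟨rfl, h⟩ | ⟨rfl, hU⟩ | ⟨-, h⟩ | ⟨-, h⟩ | ⟨-, h⟩)
        · refine Or.inr (Or.inl ⟨1, by omega, by omega, by omega, isUlam_W01 0,
            by simpa using (char_W02 (n + 1)).mpr h, Wd_ne_count (by omega)⟩)
        · exact Or.inr (Or.inr ⟨by omega, by omega, by simpa using hU⟩)
        · exact h.elim
        · exact h.elim
        · exact h.elim
    rw [existsUnique_five hP (fun _ _ => by omega) (fun _ h => h.elim) (fun _ h => h.elim)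
      (fun _ h => h.elim) (fun _ h => h.elim) (fun _ h => h.elim) (fun _ h => h.elim)
      (fun h _ => h.elim) (fun h _ => h.elim) (fun h _ => h.elim)]
    simp only [ih, not_true, not_false_iff, true_and, and_true, false_and, and_false, or_false,
      false_or]
    omega

lemma char_W4 : ∀ n a b, a + b = n → (IsUlam (Wd a 4 b) ↔ (a + b) % 4 = 1) := by
  intro n
  induction n using Nat.strong_induction_on with
  | _ n ih =>
    intro a b hn
    rw [isUlam_Wd_iff a 4 b (by omega)]
    have hP : ∀ s, (0 < s ∧ s < a + 4 + b ∧ Valid (Wd a 4 b) s) ↔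
        ((s = 1 ∧ (1 ≤ a ∧ IsUlam (Wd (a - 1) 4 b))) ∨
         (s = a + 1 ∧ IsUlam (Wd 0 3 b)) ∨
         (s = a + 2 ∧ (a % 2 = 1 ∧ b % 2 = 1)) ∨
         (s = a + 3 ∧ IsUlam (Wd a 3 0)) ∨
         (s = a + 4 + b - 1 ∧ (1 ≤ b ∧ IsUlam (Wd a 4 (b - 1))))) := by
      intro s
      rw [valid_char a 4 b s (by omega)]
      constructor
      · rintro (⟨rfl, ha, hU⟩ | ⟨j, rfl, hj0, hjk, hU1, hU2, hne⟩ | ⟨rfl, hb, hU⟩)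
        · exact Or.inl ⟨rfl, ha, hU⟩
        · have : j = 1 ∨ j = 2 ∨ j = 3 := by omega
          rcases this with rfl | rfl | rfl
          · exact Or.inr (Or.inl ⟨rfl, by simpa using hU2⟩)
          · exact Or.inr (Or.inr (Or.inl ⟨rfl, (char_W20 a).mp hU1,
              (char_W02 b).mp (by simpa using hU2)⟩))
          · exact Or.inr (Or.inr (Or.inr (Or.inl ⟨rfl, hU1⟩)))
        · exact Or.inr (Or.inr (Or.inr (Or.inr ⟨rfl, hb, hU⟩)))
      · rintro (⟨rfl, ha, hU⟩ | ⟨rfl, hU⟩ | ⟨rfl, ha, hb⟩ | ⟨rfl, hU⟩ | ⟨rfl, hb, hU⟩)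
        · exact Or.inl ⟨rfl, ha, hU⟩
        · exact Or.inr (Or.inl ⟨1, rfl, by omega, by omega, isUlam_W10 a,
            by simpa using hU, Wd_ne_count (by omega)⟩)
        · exact Or.inr (Or.inl ⟨2, rfl, by omega, by omega, (char_W20 a).mpr ha,
            by simpa using (char_W02 b).mpr hb, Wd_ne_head (by omega) (by omega)⟩)
        · exact Or.inr (Or.inl ⟨3, rfl, by omega, by omega, hU,
            by simpa using isUlam_W01 b, Wd_ne_count (by omega)⟩)
        · exact Or.inr (Or.inr ⟨rfl, hb, hU⟩)
    rw [existsUnique_five hP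
      (fun h _ => by obtain ⟨h1, -⟩ := h; omega)
      (fun _ _ => by omega)
      (fun _ _ => by omega)
      (fun _ h => by obtain ⟨h1, -⟩ := h; omega)
      (fun _ _ => by omega)
      (fun _ _ => by omega)
      (fun _ h => by obtain ⟨h1, -⟩ := h; omega)
      (fun _ _ => by omega)
      (fun _ _ => by omega)
      (fun _ h => by obtain ⟨h1, -⟩ := h; omega)]
    have e1 : (1 ≤ a ∧ IsUlam (Wd (a - 1) 4 b)) ↔ (1 ≤ a ∧ (a - 1 + b) % 4 = 1) :=
      and_congr_right fun ha => ih (a - 1 + b) (by omega) (a - 1) b rfl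
    have e5 : (1 ≤ b ∧ IsUlam (Wd a 4 (b - 1))) ↔ (1 ≤ b ∧ (a + (b - 1)) % 4 = 1) :=
      and_congr_right fun hb => ih (a + (b - 1)) (by omega) a (b - 1) rfl
    rw [e1, e5, char_W03 b, char_W30 a]
    omega

theorem ulam_four_ones (a b : ℕ) (hab : 1 ≤ a + b) :
    IsUlam (List.replicate a false ++ List.replicate 4 true ++ List.replicate b false) ↔
      (a + b) % 4 = 1 := by
  have h : List.replicate a false ++ List.replicate 4 true ++ List.replicate b false = Wd a 4 b := by
    rw [Wd, List.append_assoc]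
  rw [h]
  exact char_W4 (a + b) a b rfl
end

section
/- For every n ≥ 6, the number of Ulam words of length n is at least 2n + 4. -/
lemma ulamN_succ (n : ℕ) (w : List Bool) : UlamN (n+1) w ↔
    (w = [false] ∨ w = [true] ∨
      ∃! p : List Bool × List Bool,
        p.1 ≠ [] ∧ p.2 ≠ [] ∧ UlamN n p.1 ∧ UlamN n p.2 ∧ p.1 ≠ p.2 ∧ p.1 ++ p.2 = w) :=
  Iff.rfl

lemma ulamN_congr : ∀ m : ℕ, ∀ n : ℕ, ∀ w : List Bool, w ≠ [] → w.length ≤ m → w.length ≤ n →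
    (UlamN m w ↔ UlamN n w) := by
  intro m
  induction m using Nat.strong_induction_on with
  | _ m IH =>
    intro n w hw hm hn
    have hlen : 1 ≤ w.length := List.length_pos_iff.mpr hw
    obtain ⟨m', rfl⟩ : ∃ m', m = m' + 1 := ⟨m - 1, by omega⟩
    obtain ⟨n', rfl⟩ : ∃ n', n = n' + 1 := ⟨n - 1, by omega⟩
    rw [ulamN_succ, ulamN_succ]
    refine or_congr Iff.rfl (or_congr Iff.rfl (existsUnique_congr fun p => ?_))
    constructor
    · rintro ⟨h1, h2, h3, h4, h5, h6⟩
      have l1 : p.1.length ≤ m' := by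
        have := congrArg List.length h6
        simp at this
        have : p.1.length + p.2.length = w.length := this
        have h2' : 1 ≤ p.2.length := List.length_pos_iff.mpr h2
        omega
      have l2 : p.2.length ≤ m' := by
        have := congrArg List.length h6
        simp at this
        have : p.1.length + p.2.length = w.length := this
        have h1' : 1 ≤ p.1.length := List.length_pos_iff.mpr h1
        omega
      have l1' : p.1.length ≤ n' := by
        have := congrArg List.length h6
        simp at this
        have : p.1.length + p.2.length = w.length := this
        have h2' : 1 ≤ p.2.length := List.length_pos_iff.mpr h2
        omega
      have l2' : p.2.length ≤ n' := by
        have := congrArg List.length h6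
        simp at this
        have : p.1.length + p.2.length = w.length := this
        have h1' : 1 ≤ p.1.length := List.length_pos_iff.mpr h1
        omega
      exact ⟨h1, h2, (IH m' (by omega) n' p.1 h1 l1 l1').mp h3,
        (IH m' (by omega) n' p.2 h2 l2 l2').mp h4, h5, h6⟩
    · rintro ⟨h1, h2, h3, h4, h5, h6⟩
      have hl := congrArg List.length h6
      simp at hl
      have h1' : 1 ≤ p.1.length := List.length_pos_iff.mpr h1
      have h2' : 1 ≤ p.2.length := List.length_pos_iff.mpr h2
      exact ⟨h1, h2, (IH m' (by omega) n' p.1 h1 (by omega) (by omega)).mpr h3,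
        (IH m' (by omega) n' p.2 h2 (by omega) (by omega)).mpr h4, h5, h6⟩

lemma isUlam_ne_nil {w : List Bool} (h : IsUlam w) : w ≠ [] := by
  rintro rfl; exact h

lemma isUlam_false : IsUlam [false] := Or.inl rfl
lemma isUlam_true : IsUlam [true] := Or.inr (Or.inl rfl)

/-- The main working characterization for words of length ≥ 2. -/
lemma isUlam_iff_two {w : List Bool} (hw : 2 ≤ w.length) :
    IsUlam w ↔ ∃! p : List Bool × List Bool,
      p.1 ≠ [] ∧ p.2 ≠ [] ∧ IsUlam p.1 ∧ IsUlam p.2 ∧ p.1 ≠ p.2 ∧ p.1 ++ p.2 = w := by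
  obtain ⟨k, hk⟩ : ∃ k, w.length = k + 1 := ⟨w.length - 1, by omega⟩
  have hwne : w ≠ [] := by intro h; subst h; simp at hw
  unfold IsUlam
  rw [hk, ulamN_succ]
  have hf : w ≠ [false] := by intro h; subst h; simp at hw
  have ht : w ≠ [true] := by intro h; subst h; simp at hw
  simp only [hf, ht, false_or]
  refine existsUnique_congr fun p => ?_
  constructor
  · rintro ⟨h1, h2, h3, h4, h5, h6⟩
    have hl := congrArg List.length h6
    simp at hl
    have h1' : 1 ≤ p.1.length := List.length_pos_iff.mpr h1
    have h2' : 1 ≤ p.2.length := List.length_pos_iff.mpr h2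
    exact ⟨h1, h2, (ulamN_congr k p.1.length p.1 h1 (by omega) le_rfl).mp h3,
      (ulamN_congr k p.2.length p.2 h2 (by omega) le_rfl).mp h4, h5, h6⟩
  · rintro ⟨h1, h2, h3, h4, h5, h6⟩
    have hl := congrArg List.length h6
    simp at hl
    have h1' : 1 ≤ p.1.length := List.length_pos_iff.mpr h1
    have h2' : 1 ≤ p.2.length := List.length_pos_iff.mpr h2
    exact ⟨h1, h2, (ulamN_congr k p.1.length p.1 h1 (by omega) le_rfl).mpr h3,
      (ulamN_congr k p.2.length p.2 h2 (by omega) le_rfl).mpr h4, h5, h6⟩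

abbrev Z (k : ℕ) : List Bool := List.replicate k false
abbrev O (k : ℕ) : List Bool := List.replicate k true

lemma append_eq_repl {u v : List Bool} {b : Bool} {k : ℕ} (h : u ++ v = List.replicate k b) :
    u = List.replicate u.length b ∧ v = List.replicate v.length b ∧ k = u.length + v.length := by
  have hmem : ∀ x ∈ u ++ v, x = b := by
    intro x hx; rw [h] at hx; exact List.eq_of_mem_replicate hx
  refine ⟨List.eq_replicate_iff.mpr ⟨rfl, fun x hx => hmem x (List.mem_append_left _ hx)⟩,
    List.eq_replicate_iff.mpr ⟨rfl, fun x hx => hmem x (List.mem_append_right _ hx)⟩, ?_⟩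
  have := congrArg List.length h
  simp at this; omega

/-- Key splitting lemma across a block of `false`s followed by `true`. -/
lemma split_Z {u v t : List Bool} {a : ℕ} (h : u ++ v = Z a ++ true :: t) :
    (∃ i j, a = i + j ∧ u = Z i ∧ v = Z j ++ true :: t) ∨
    (∃ s, u = Z a ++ true :: s ∧ t = s ++ v) := by
  rcases List.append_eq_append_iff.mp h with ⟨a', ha1, ha2⟩ | ⟨c', hc1, hc2⟩
  · obtain ⟨hu, ha', hlen⟩ := append_eq_repl ha1.symm
    exact Or.inl ⟨u.length, a'.length, hlen, hu, by rw [ha2, ha']; simp⟩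
  · cases c' with
    | nil => exact Or.inl ⟨a, 0, by omega, by simpa using hc1, by simpa using hc2.symm⟩
    | cons x s =>
      cases hc2 with
      | refl => exact Or.inr ⟨s, hc1, rfl⟩

lemma cons_split {s v t : List α} {x : α} (h : s ++ v = x :: t) :
    (s = [] ∧ v = x :: t) ∨ ∃ s', s = x :: s' ∧ s' ++ v = t := by
  cases s with
  | nil => exact Or.inl ⟨rfl, h⟩
  | cons y s' =>
    simp at h
    exact Or.inr ⟨s', by rw [h.1], h.2⟩

lemma Z_cancel : ∀ a b : ℕ, ∀ u v : List Bool, Z a ++ true :: u = Z b ++ true :: v →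
    a = b ∧ u = v := by
  intro a
  induction a with
  | zero => intro b u v h; cases b with
    | zero => simpa using h
    | succ b => simp [List.replicate_succ] at h
  | succ a IH =>
    intro b u v h
    cases b with
    | zero => simp [List.replicate_succ] at h
    | succ b =>
      simp only [List.replicate_succ, List.cons_append, List.cons.injEq] at h
      obtain ⟨h1, h2⟩ := IH b u v h.2
      exact ⟨by omega, h2⟩

lemma not_isUlam_nil : ¬ IsUlam [] := fun h => h

/-- All-false Ulam words are exactly `[false]`. -/
lemma isUlam_Z_iff : ∀ k : ℕ, IsUlam (Z k) ↔ k = 1 := by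
  intro k
  induction k using Nat.strong_induction_on with
  | _ k IH =>
    constructor
    · intro h
      by_contra hne
      rcases Nat.lt_or_ge k 2 with hk | hk
      · interval_cases k
        · exact not_isUlam_nil h
        · exact hne rfl
      · rw [isUlam_iff_two (by simp; omega)] at h
        obtain ⟨p, ⟨h1, h2, h3, h4, h5, h6⟩, _⟩ := h
        obtain ⟨hu, hv, hlen⟩ := append_eq_repl h6
        have l1 : 1 ≤ p.1.length := List.length_pos_iff.mpr h1
        have l2 : 1 ≤ p.2.length := List.length_pos_iff.mpr h2
        have e1 : p.1.length = 1 := (IH p.1.length (by omega)).mp (by rw [show (Z p.1.length : List Bool) = p.1 from hu.symm]; exact h3)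
        have e2 : p.2.length = 1 := (IH p.2.length (by omega)).mp (by rw [show (Z p.2.length : List Bool) = p.2 from hv.symm]; exact h4)
        apply h5
        rw [hu, hv, e1, e2]
    · rintro rfl; exact isUlam_false

/-- Bit-flip symmetry. -/
lemma ulamN_flip : ∀ n : ℕ, ∀ w : List Bool, UlamN n w → UlamN n (w.map Bool.not) := by
  intro n
  induction n with
  | zero => intro w h; exact h.elim
  | succ n IH =>
    intro w h
    rcases h with rfl | rfl | ⟨p, ⟨h1, h2, h3, h4, h5, h6⟩, hu⟩
    · exact Or.inr (Or.inl rfl)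
    · exact Or.inl rfl
    · refine Or.inr (Or.inr ⟨(p.1.map Bool.not, p.2.map Bool.not),
        ⟨by simpa using h1, by simpa using h2, IH _ h3, IH _ h4,
         fun hc => h5 (by
          have := congrArg (List.map Bool.not) hc
          simpa [List.map_map, Function.comp_def] using this),
         by rw [← List.map_append, h6]⟩, ?_⟩)
      rintro q ⟨g1, g2, g3, g4, g5, g6⟩
      have hq : (q.1.map Bool.not, q.2.map Bool.not) = p := by
        apply hu
        refine ⟨by simpa using g1, by simpa using g2, IH _ g3, IH _ g4,
          fun hc => g5 (by
            have := congrArg (List.map Bool.not) hc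
            simpa [List.map_map, Function.comp_def] using this),
          ?_⟩
        rw [← List.map_append, g6]
        simp [List.map_map, Function.comp_def]
      have hq1 := congrArg (fun r => r.1.map Bool.not) hq
      have hq2 := congrArg (fun r => r.2.map Bool.not) hq
      simp [List.map_map, Function.comp_def] at hq1 hq2
      exact Prod.ext hq1 hq2

lemma isUlam_flip_iff {w : List Bool} : IsUlam (w.map Bool.not) ↔ IsUlam w := by
  constructor
  · intro h
    have := ulamN_flip _ _ h
    simpa [IsUlam, List.map_map, Function.comp_def] using this
  · intro h
    have := ulamN_flip _ _ h
    simpa [IsUlam] using this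

/-- Reversal symmetry. -/
lemma ulamN_rev : ∀ n : ℕ, ∀ w : List Bool, UlamN n w → UlamN n w.reverse := by
  intro n
  induction n with
  | zero => intro w h; exact h.elim
  | succ n IH =>
    intro w h
    rcases h with rfl | rfl | ⟨p, ⟨h1, h2, h3, h4, h5, h6⟩, hu⟩
    · exact Or.inl rfl
    · exact Or.inr (Or.inl rfl)
    · refine Or.inr (Or.inr ⟨(p.2.reverse, p.1.reverse),
        ⟨by simpa using h2, by simpa using h1, IH _ h4, IH _ h3,
         fun hc => h5 (by
          have := congrArg List.reverse hc
          simpa using this.symm),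
         by rw [← List.reverse_append, h6]⟩, ?_⟩)
      rintro q ⟨g1, g2, g3, g4, g5, g6⟩
      have hq : (q.2.reverse, q.1.reverse) = p := by
        apply hu
        refine ⟨by simpa using g2, by simpa using g1, IH _ g4, IH _ g3,
          fun hc => g5 (by
            have := congrArg List.reverse hc
            simpa using this.symm), ?_⟩
        rw [← List.reverse_append, g6]
        simp
      have hq1 := congrArg (fun r => r.2.reverse) hq
      have hq2 := congrArg (fun r => r.1.reverse) hq
      simp at hq1 hq2
      exact Prod.ext hq1 hq2

lemma isUlam_rev_iff {w : List Bool} : IsUlam w.reverse ↔ IsUlam w := by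
  constructor
  · intro h
    have := ulamN_rev _ _ h
    simpa [IsUlam] using this
  · intro h
    have := ulamN_rev _ _ h
    simpa [IsUlam] using this
lemma Z_ne_nil_true (a : ℕ) : (Z a ++ [true] : List Bool) ≠ [] := by simp

lemma one_le_of_Z {i : ℕ} {l : List Bool} (hl : l = Z i) (h : l ≠ []) : 1 ≤ i := by
  rcases Nat.eq_zero_or_pos i with rfl | h1
  · simp at hl; exact absurd hl h
  · exact h1

/-- Classification of candidate decompositions of `0^a 1`. -/
lemma classify_S1 {a : ℕ} {p : List Bool × List Bool} (h1 : p.1 ≠ []) (h2 : p.2 ≠ [])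
    (h3 : IsUlam p.1) (h6 : p.1 ++ p.2 = Z a ++ [true]) :
    1 ≤ a ∧ p = ([false], Z (a-1) ++ [true]) := by
  have h6' : p.1 ++ p.2 = Z a ++ true :: ([] : List Bool) := by simpa using h6
  rcases split_Z h6' with ⟨i, j, hij, hi, hj⟩ | ⟨s, hs1, hs2⟩
  · have hi1 : i = 1 := (isUlam_Z_iff i).mp (hi ▸ h3)
    subst hi1
    refine ⟨by omega, ?_⟩
    have : j = a - 1 := by omega
    subst this
    have : p.1 = [false] := by simpa using hi
    rw [Prod.ext_iff]
    exact ⟨this, by simpa using hj⟩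
  · exact absurd (List.append_eq_nil_iff.mp hs2.symm).2 h2

lemma isUlam_Z_true : ∀ a : ℕ, IsUlam (Z a ++ [true]) := by
  intro a
  induction a with
  | zero => simpa using isUlam_true
  | succ a IH =>
    rw [isUlam_iff_two (by simp)]
    refine ⟨([false], Z a ++ [true]), ⟨by simp, by simp, isUlam_false, IH, ?_, ?_⟩, ?_⟩
    · intro hc
      have hc' : ([false] : List Bool) = Z a ++ [true] := hc
      have : true ∈ ([false] : List Bool) := by rw [hc']; simp
      simp at this
    · show [false] ++ (Z a ++ [true]) = Z (a+1) ++ [true]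
      simp [List.replicate_succ]
    · rintro p ⟨g1, g2, g3, g4, g5, g6⟩
      obtain ⟨-, hp⟩ := classify_S1 g1 g2 g3 g6
      simpa using hp

lemma isUlam_true_Z (b : ℕ) : IsUlam (true :: Z b) := by
  have h := isUlam_Z_true b
  have h2 := isUlam_rev_iff.mpr h
  simpa using h2

/-- Classification for `0 1 0^b`. -/
lemma classify_h1 {b : ℕ} {p : List Bool × List Bool} (h1 : p.1 ≠ []) (h2 : p.2 ≠ [])
    (h3 : IsUlam p.1) (h4 : IsUlam p.2) (h6 : p.1 ++ p.2 = false :: true :: Z b) :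
    p = ([false], true :: Z b) ∨
    (1 ≤ b ∧ p = (false :: true :: Z (b-1), [false]) ∧ IsUlam (false :: true :: Z (b-1))) := by
  have h6' : p.1 ++ p.2 = Z 1 ++ true :: Z b := by simpa [List.replicate_succ] using h6
  rcases split_Z h6' with ⟨i, j, hij, hi, hj⟩ | ⟨s, hs1, hs2⟩
  · have : 1 ≤ i := one_le_of_Z hi h1
    have hi1 : i = 1 := by omega
    have hj0 : j = 0 := by omega
    subst hi1; subst hj0
    exact Or.inl (Prod.ext (by simpa using hi) (by simpa using hj))
  · obtain ⟨hs, hp2, hb⟩ := append_eq_repl hs2.symm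
    have hlen : 1 ≤ p.2.length := List.length_pos_iff.mpr h2
    have hl1 : p.2.length = 1 := (isUlam_Z_iff _).mp (by
      rw [show (Z p.2.length : List Bool) = p.2 from hp2.symm]; exact h4)
    refine Or.inr ⟨by omega, ?_, ?_⟩
    · refine Prod.ext ?_ ?_
      · show p.1 = false :: true :: Z (b-1)
        rw [hs1, hs]
        simp [List.replicate_succ]
        congr 1
        omega
      · show p.2 = [false]
        rw [hp2, hl1]
        rfl
    · have : p.1 = false :: true :: Z (b - 1) := by
        rw [hs1, hs]
        simp [List.replicate_succ]
        congr 1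
        omega
      rw [← this]; exact h3

lemma isUlam_01Z : ∀ b : ℕ, IsUlam (false :: true :: Z b) ↔ Even b := by
  intro b
  induction b using Nat.strong_induction_on with
  | _ b IH =>
    constructor
    · intro h
      by_contra hodd
      have hb1 : 1 ≤ b := by
        rcases Nat.eq_zero_or_pos b with rfl | h1
        · exact absurd Even.zero hodd
        · exact h1
      have hbeven : Even (b - 1) := by
        rcases Nat.even_or_odd b with he | ho
        · exact absurd he hodd
        · obtain ⟨c, hc⟩ := ho; exact ⟨c, by omega⟩
      rw [isUlam_iff_two (by simp)] at h
      obtain ⟨p, -, hu⟩ := h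
      have e1 : ([false], true :: Z b) = p := hu _ ⟨by simp, by simp, isUlam_false,
        isUlam_true_Z b, by simp, by simp⟩
      have e2 : ((false :: true :: Z (b-1) : List Bool), ([false] : List Bool)) = p := by
        apply hu
        refine ⟨by simp, by simp, (IH (b-1) (by omega)).mpr hbeven, isUlam_false, by simp, ?_⟩
        show (false :: true :: Z (b-1)) ++ [false] = false :: true :: Z b
        simp
        rw [show b = (b-1) + 1 by omega]
        simp [List.replicate_succ']
      rw [← e2] at e1
      simp at e1
    · intro heven
      rw [isUlam_iff_two (by simp)]
      refine ⟨([false], true :: Z b), ⟨by simp, by simp, isUlam_false, isUlam_true_Z b,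
        by simp, by simp⟩, ?_⟩
      rintro p ⟨g1, g2, g3, g4, g5, g6⟩
      rcases classify_h1 g1 g2 g3 g4 g6 with hp | ⟨hb, hp, hul⟩
      · simp [hp]
      · have : Even (b - 1) := (IH (b-1) (by omega)).mp hul
        obtain ⟨c, hc⟩ := heven
        obtain ⟨d, hd⟩ := this
        omega

lemma isUlam_Z10 (a : ℕ) : IsUlam (Z a ++ [true, false]) ↔ Even a := by
  rw [← isUlam_01Z a, ← isUlam_rev_iff (w := false :: true :: Z a)]
  have : (false :: true :: Z a).reverse = Z a ++ [true, false] := by simp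
  rw [this]
/-- Classification of candidate decompositions of `0^a 1 1 0^b`. -/
lemma classify_f {a b : ℕ} {p : List Bool × List Bool} (h1 : p.1 ≠ []) (h2 : p.2 ≠ [])
    (h3 : IsUlam p.1) (h4 : IsUlam p.2)
    (h6 : p.1 ++ p.2 = Z a ++ true :: true :: Z b) :
    (1 ≤ a ∧ p = ([false], Z (a-1) ++ true :: true :: Z b)) ∨
    (p = (Z a ++ [true], true :: Z b)) ∨
    (1 ≤ b ∧ p = (Z a ++ true :: true :: Z (b-1), [false]) ∧
      IsUlam (Z a ++ true :: true :: Z (b-1))) := by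
  rcases split_Z h6 with ⟨i, j, hij, hi, hj⟩ | ⟨s, hs1, hs2⟩
  · have : 1 ≤ i := one_le_of_Z hi h1
    have hi1 : i = 1 := (isUlam_Z_iff i).mp (by
      rw [show (Z i : List Bool) = p.1 from hi.symm]; exact h3)
    refine Or.inl ⟨by omega, Prod.ext (by rw [hi, hi1]; rfl) ?_⟩
    rw [hj]
    have : j = a - 1 := by omega
    rw [this]
  · rcases cons_split hs2.symm with ⟨hsnil, hp2⟩ | ⟨s', hs', hrest⟩
    · subst hsnil
      exact Or.inr (Or.inl (Prod.ext (by simpa using hs1) hp2))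
    · obtain ⟨hsz, hp2, hb⟩ := append_eq_repl hrest
      have hl1 : p.2.length = 1 := (isUlam_Z_iff _).mp (by
        rw [show (Z p.2.length : List Bool) = p.2 from hp2.symm]; exact h4)
      have hsl : s'.length = b - 1 := by omega
      have hp1 : p.1 = Z a ++ true :: true :: Z (b-1) := by
        rw [hs1, hs', hsz, hsl]
      refine Or.inr (Or.inr ⟨by omega, Prod.ext hp1 (by rw [hp2, hl1]; rfl), hp1 ▸ h3⟩)

lemma Z_true_ne_true_Z {a b : ℕ} (h : ¬ (a = 0 ∧ b = 0)) :
    (Z a ++ [true] : List Bool) ≠ true :: Z b := by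
  intro hc
  have hc' : Z a ++ true :: ([] : List Bool) = Z 0 ++ true :: Z b := by simpa using hc
  obtain ⟨h1, h2⟩ := Z_cancel _ _ _ _ hc'
  exact h ⟨h1, by simpa using h2.symm⟩

lemma isUlam_f : ∀ k a b : ℕ, a + b = k → (IsUlam (Z a ++ true :: true :: Z b) ↔ Odd k) := by
  intro k
  induction k using Nat.strong_induction_on with
  | _ k IH =>
    intro a b hab
    have hlen : 2 ≤ (Z a ++ true :: true :: Z b).length := by simp; omega
    constructor
    · intro h
      by_contra hodd
      have heven : Even k := Nat.not_odd_iff_even.mp hodd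
      rw [isUlam_iff_two hlen] at h
      obtain ⟨p, hp, hu⟩ := h
      rcases Nat.eq_zero_or_pos a with rfl | ha
      · rcases Nat.eq_zero_or_pos b with rfl | hb
        · obtain ⟨g1, g2, g3, g4, g5, g6⟩ := hp
          rcases classify_f g1 g2 g3 g4 g6 with ⟨ha', _⟩ | hp' | ⟨hb', _, _⟩
          · omega
          · apply g5
            rw [hp']
            simp
          · omega
        · have e1 : (([true] : List Bool), (true :: Z b : List Bool)) = p := by
            apply hu
            refine ⟨by simp, by simp, isUlam_true, isUlam_true_Z b, ?_, by simp⟩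
            intro hc
            have := congrArg List.length hc
            simp at this
            omega
          have e2 : ((true :: true :: Z (b-1) : List Bool), ([false] : List Bool)) = p := by
            apply hu
            refine ⟨by simp, by simp, ?_, isUlam_false, by simp, ?_⟩
            · have := (IH (k-1) (by omega) 0 (b-1) (by omega)).mpr
                (Nat.Even.sub_odd (by omega) heven (by exact ⟨0, rfl⟩))
              simpa using this
            · show (true :: true :: Z (b-1)) ++ [false] = Z 0 ++ true :: true :: Z b
              simp
              rw [show b = (b-1) + 1 by omega]
              simp [List.replicate_succ']
          rw [← e2] at e1
          have := congrArg (fun q => q.2.length) e1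
          simp at this
          omega
      · have e1 : (([false] : List Bool), (Z (a-1) ++ true :: true :: Z b : List Bool)) = p := by
          apply hu
          refine ⟨by simp, by simp, isUlam_false, ?_, ?_, ?_⟩
          · exact (IH (k-1) (by omega) (a-1) b (by omega)).mpr
              (Nat.Even.sub_odd (by omega) heven ⟨0, rfl⟩)
          · intro hc
            have : true ∈ ([false] : List Bool) := by
              have hc' : ([false] : List Bool) = Z (a-1) ++ true :: true :: Z b := hc
              rw [hc']; simp
            simp at this
          · show [false] ++ (Z (a-1) ++ true :: true :: Z b) = Z a ++ true :: true :: Z b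
            rw [show a = (a-1) + 1 by omega]
            simp [List.replicate_succ]
        have e2 : ((Z a ++ [true] : List Bool), (true :: Z b : List Bool)) = p := by
          apply hu
          exact ⟨by simp, by simp, isUlam_Z_true a, isUlam_true_Z b,
            Z_true_ne_true_Z (by omega), by simp⟩
        rw [← e2] at e1
        have := congrArg (fun q => q.1.length) e1
        simp at this
        omega
    · intro hodd
      rw [isUlam_iff_two hlen]
      refine ⟨(Z a ++ [true], true :: Z b), ⟨by simp, by simp, isUlam_Z_true a,
        isUlam_true_Z b, Z_true_ne_true_Z (by rintro ⟨rfl, rfl⟩; obtain ⟨c, hc⟩ := hodd; omega), by simp⟩, ?_⟩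
      rintro p ⟨g1, g2, g3, g4, g5, g6⟩
      rcases classify_f g1 g2 g3 g4 g6 with ⟨ha, hp⟩ | hp | ⟨hb, hp, hul⟩
      · exfalso
        have : IsUlam (Z (a-1) ++ true :: true :: Z b) := by
          rw [hp] at g4; exact g4
        have := (IH (k-1) (by omega) (a-1) b (by omega)).mp this
        rcases hodd with ⟨c, hc⟩; rcases this with ⟨d, hd⟩; omega
      · rw [hp]
      · exfalso
        have := (IH (k-1) (by omega) a (b-1) (by omega)).mp hul
        rcases hodd with ⟨c, hc⟩; rcases this with ⟨d, hd⟩; omega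
lemma isUlam_O_iff (k : ℕ) : IsUlam (O k) ↔ k = 1 := by
  rw [← isUlam_flip_iff (w := O k)]
  have : (O k).map Bool.not = Z k := by simp
  rw [this, isUlam_Z_iff]

lemma one_le_of_O {i : ℕ} {l : List Bool} (hl : l = O i) (h : l ≠ []) : 1 ≤ i := by
  rcases Nat.eq_zero_or_pos i with rfl | h1
  · simp at hl; exact absurd hl h
  · exact h1

lemma odd_add_two' {b : ℕ} : Odd (b + 2) ↔ Odd b := by
  constructor
  · rintro ⟨c, hc⟩; exact ⟨c - 1, by omega⟩
  · rintro ⟨c, hc⟩; exact ⟨c + 1, by omega⟩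

lemma Z_true_ne_01Z {a b : ℕ} (h : ¬ (a = 1 ∧ b = 0)) :
    (Z a ++ [true] : List Bool) ≠ false :: true :: Z b := by
  intro hc
  have hc' : Z a ++ true :: ([] : List Bool) = Z 1 ++ true :: Z b := by
    simpa [List.replicate_succ] using hc
  obtain ⟨h1, h2⟩ := Z_cancel _ _ _ _ hc'
  have : b = 0 := by simpa using h2.symm
  exact h ⟨h1, this⟩

lemma Z10_ne_true_Z {a b : ℕ} (h : ¬ (a = 0 ∧ b = 1)) :
    (Z a ++ [true, false] : List Bool) ≠ true :: Z b := by
  intro hc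
  have hc' : Z a ++ true :: ([false] : List Bool) = Z 0 ++ true :: Z b := by simpa using hc
  obtain ⟨h1, h2⟩ := Z_cancel _ _ _ _ hc'
  have : ([false] : List Bool) = List.replicate b false := h2
  have hb : b = 1 := by
    have h' := congrArg List.length this
    simp at h'
    omega
  exact h ⟨h1, hb⟩

/-- Classification of candidate decompositions of `0^a 1 0 1 0^b`. -/
lemma classify_g {a b : ℕ} {p : List Bool × List Bool} (h1 : p.1 ≠ []) (h2 : p.2 ≠ [])
    (h3 : IsUlam p.1) (h4 : IsUlam p.2)
    (h6 : p.1 ++ p.2 = Z a ++ true :: false :: true :: Z b) :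
    (1 ≤ a ∧ p = ([false], Z (a-1) ++ true :: false :: true :: Z b)) ∨
    (p = (Z a ++ [true], false :: true :: Z b)) ∨
    (p = (Z a ++ [true, false], true :: Z b)) ∨
    (1 ≤ b ∧ p = (Z a ++ true :: false :: true :: Z (b-1), [false]) ∧
      IsUlam (Z a ++ true :: false :: true :: Z (b-1))) := by
  rcases split_Z h6 with ⟨i, j, hij, hi, hj⟩ | ⟨s, hs1, hs2⟩
  · have : 1 ≤ i := one_le_of_Z hi h1
    have hi1 : i = 1 := (isUlam_Z_iff i).mp (by
      rw [show (Z i : List Bool) = p.1 from hi.symm]; exact h3)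
    refine Or.inl ⟨by omega, Prod.ext (by rw [hi, hi1]; rfl) ?_⟩
    rw [hj]
    have : j = a - 1 := by omega
    rw [this]
  · rcases cons_split hs2.symm with ⟨hsnil, hp2⟩ | ⟨s₂, hs₂, hrest⟩
    · subst hsnil
      exact Or.inr (Or.inl (Prod.ext (by simpa using hs1) hp2))
    · rcases cons_split hrest with ⟨hs₂nil, hp2⟩ | ⟨s₃, hs₃, hrest₂⟩
      · subst hs₂nil
        refine Or.inr (Or.inr (Or.inl (Prod.ext ?_ hp2)))
        rw [hs1, hs₂]
      · obtain ⟨hsz, hp2, hb⟩ := append_eq_repl hrest₂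
        have hl1 : p.2.length = 1 := (isUlam_Z_iff _).mp (by
          rw [show (Z p.2.length : List Bool) = p.2 from hp2.symm]; exact h4)
        have hsl : s₃.length = b - 1 := by omega
        have hp1 : p.1 = Z a ++ true :: false :: true :: Z (b-1) := by
          rw [hs1, hs₂, hs₃, hsz, hsl]
        exact Or.inr (Or.inr (Or.inr ⟨by omega,
          Prod.ext hp1 (by rw [hp2, hl1]; rfl), hp1 ▸ h3⟩))

lemma isUlam_g : ∀ k a b : ℕ, a + b = k →
    (IsUlam (Z a ++ true :: false :: true :: Z b) ↔ (Odd k ∧ 3 ≤ k)) := by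
  intro k
  induction k using Nat.strong_induction_on with
  | _ k IH =>
    intro a b hab
    have hlen : 2 ≤ (Z a ++ true :: false :: true :: Z b).length := by simp; omega
    constructor
    · intro h
      by_contra hbad
      rw [isUlam_iff_two hlen] at h
      obtain ⟨p, hp, hu⟩ := h
      rcases Nat.even_or_odd a with hea | hoa
      · rcases Nat.even_or_odd b with heb | hob
        · -- both even: two decompositions
          have e1 : ((Z a ++ [true] : List Bool), (false :: true :: Z b : List Bool)) = p := by
            apply hu
            refine ⟨by simp, by simp, isUlam_Z_true a, (isUlam_01Z b).mpr heb,
              Z_true_ne_01Z ?_, by simp⟩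
            rintro ⟨rfl, rfl⟩
            obtain ⟨c, hc⟩ := hea; omega
          have e2 : ((Z a ++ [true, false] : List Bool), (true :: Z b : List Bool)) = p := by
            apply hu
            refine ⟨by simp, by simp, (isUlam_Z10 a).mpr hea, isUlam_true_Z b,
              Z10_ne_true_Z ?_, by simp⟩
            rintro ⟨rfl, rfl⟩
            obtain ⟨c, hc⟩ := heb; omega
          rw [← e2] at e1
          have := congrArg (fun q => q.1.length) e1
          simp at this
        · -- a even, b odd: k odd, so k < 3, i.e. k = 1, (a,b) = (0,1)
          have hoddk : Odd k := by
            obtain ⟨c, hc⟩ := hea; obtain ⟨c', hc'⟩ := hob; exact ⟨c + c', by omega⟩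
          have hk : k = 1 := by
            rcases Nat.lt_or_ge k 3 with h3 | h3
            · obtain ⟨c, hc⟩ := hoddk; omega
            · exact absurd ⟨hoddk, h3⟩ hbad
          have ha0 : a = 0 := by obtain ⟨c, hc⟩ := hea; omega
          have hb1 : b = 1 := by omega
          subst ha0; subst hb1
          obtain ⟨g1, g2, g3, g4, g5, g6⟩ := hp
          rcases classify_g g1 g2 g3 g4 g6 with ⟨ha', _⟩ | hp' | hp' | ⟨hb', hp', hul⟩
          · omega
          · rw [hp'] at g4
            have := (isUlam_01Z 1).mp g4
            obtain ⟨c, hc⟩ := this; omega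
          · apply g5; rw [hp']; simp
          · have := (IH 0 (by omega) 0 0 rfl).mp hul
            omega
      · rcases Nat.even_or_odd b with heb | hob
        · -- a odd, b even: k odd, k = 1, (a,b) = (1,0)
          have hoddk : Odd k := by
            obtain ⟨c, hc⟩ := hoa; obtain ⟨c', hc'⟩ := heb; exact ⟨c + c', by omega⟩
          have hk : k = 1 := by
            rcases Nat.lt_or_ge k 3 with h3 | h3
            · obtain ⟨c, hc⟩ := hoddk; omega
            · exact absurd ⟨hoddk, h3⟩ hbad
          have ha1 : a = 1 := by obtain ⟨c, hc⟩ := hoa; omega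
          have hb0 : b = 0 := by omega
          subst ha1; subst hb0
          obtain ⟨g1, g2, g3, g4, g5, g6⟩ := hp
          rcases classify_g g1 g2 g3 g4 g6 with ⟨ha', hp'⟩ | hp' | hp' | ⟨hb', hp', hul⟩
          · rw [hp'] at g4
            have := (IH 0 (by omega) 0 0 rfl).mp (by simpa using g4)
            omega
          · apply g5; rw [hp']; simp [List.replicate_succ]
          · rw [hp'] at g3
            have := (isUlam_Z10 1).mp g3
            obtain ⟨c, hc⟩ := this; omega
          · omega
        · -- both odd: k even ≥ 2
          rcases Nat.lt_or_ge k 4 with h4 | h4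
          · -- k = 2, (a,b) = (1,1): no decomposition
            have ha1 : a = 1 := by
              obtain ⟨c, hc⟩ := hoa; obtain ⟨c', hc'⟩ := hob; omega
            have hb1 : b = 1 := by obtain ⟨c', hc'⟩ := hob; omega
            subst ha1; subst hb1
            obtain ⟨g1, g2, g3, g4, g5, g6⟩ := hp
            rcases classify_g g1 g2 g3 g4 g6 with ⟨ha', hp'⟩ | hp' | hp' | ⟨hb', hp', hul⟩
            · rw [hp'] at g4
              have := (IH 1 (by omega) 0 1 rfl).mp (by simpa using g4)
              omega
            · rw [hp'] at g4
              have := (isUlam_01Z 1).mp g4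
              obtain ⟨c, hc⟩ := this; omega
            · rw [hp'] at g3
              have := (isUlam_Z10 1).mp g3
              obtain ⟨c, hc⟩ := this; omega
            · have := (IH 1 (by omega) 1 0 rfl).mp hul
              omega
          · -- k even ≥ 4: two decompositions
            have ha1 : 1 ≤ a := by obtain ⟨c, hc⟩ := hoa; omega
            have hb1 : 1 ≤ b := by obtain ⟨c, hc⟩ := hob; omega
            have hkodd : Odd (k - 1) := by
              obtain ⟨c, hc⟩ := hoa; obtain ⟨c', hc'⟩ := hob
              exact ⟨c + c', by omega⟩
            have e1 : (([false] : List Bool),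
                (Z (a-1) ++ true :: false :: true :: Z b : List Bool)) = p := by
              apply hu
              refine ⟨by simp, by simp, isUlam_false, ?_, ?_, ?_⟩
              · exact (IH (k-1) (by omega) (a-1) b (by omega)).mpr ⟨hkodd, by omega⟩
              · intro hc
                have hc' : ([false] : List Bool) = Z (a-1) ++ true :: false :: true :: Z b := hc
                have : true ∈ ([false] : List Bool) := by rw [hc']; simp
                simp at this
              · show [false] ++ (Z (a-1) ++ true :: false :: true :: Z b) =
                  Z a ++ true :: false :: true :: Z b
                rw [show a = (a-1) + 1 by omega]
                simp [List.replicate_succ]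
            have e2 : ((Z a ++ true :: false :: true :: Z (b-1) : List Bool),
                ([false] : List Bool)) = p := by
              apply hu
              refine ⟨by simp, by simp, ?_, isUlam_false, ?_, ?_⟩
              · exact (IH (k-1) (by omega) a (b-1) (by omega)).mpr ⟨hkodd, by omega⟩
              · intro hc
                have hc' : (Z a ++ true :: false :: true :: Z (b-1) : List Bool) = [false] := hc
                have : true ∈ ([false] : List Bool) := by rw [← hc']; simp
                simp at this
              · show (Z a ++ true :: false :: true :: Z (b-1)) ++ [false] =
                  Z a ++ true :: false :: true :: Z b
                rw [show b = (b-1) + 1 by omega]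
                simp [List.replicate_succ']
            rw [← e2] at e1
            have := congrArg (fun q => q.1.length) e1
            simp at this
            omega
    · rintro ⟨hodd, h3k⟩
      rw [isUlam_iff_two hlen]
      rcases Nat.even_or_odd a with hea | hoa
      · -- a even, b odd: witness (0^a 1 0, 1 0^b)
        have hob : Odd b := by
          obtain ⟨c, hc⟩ := hodd; obtain ⟨c', hc'⟩ := hea; exact ⟨c - c', by omega⟩
        refine ⟨(Z a ++ [true, false], true :: Z b), ⟨by simp, by simp,
          (isUlam_Z10 a).mpr hea, isUlam_true_Z b, Z10_ne_true_Z ?_, by simp⟩, ?_⟩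
        · rintro ⟨rfl, rfl⟩; omega
        · rintro p ⟨g1, g2, g3, g4, g5, g6⟩
          rcases classify_g g1 g2 g3 g4 g6 with ⟨ha', hp'⟩ | hp' | hp' | ⟨hb', hp', hul⟩
          · rw [hp'] at g4
            have := ((IH (k-1) (by omega) (a-1) b (by omega)).mp g4).1
            obtain ⟨c, hc⟩ := this; obtain ⟨c', hc'⟩ := hodd; omega
          · rw [hp'] at g4
            have := (isUlam_01Z b).mp g4
            obtain ⟨c, hc⟩ := this; obtain ⟨c', hc'⟩ := hob; omega
          · rw [hp']
          · have := ((IH (k-1) (by omega) a (b-1) (by omega)).mp hul).1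
            obtain ⟨c, hc⟩ := this; obtain ⟨c', hc'⟩ := hodd; omega
      · -- a odd, b even: witness (0^a 1, 0 1 0^b)
        have heb : Even b := by
          obtain ⟨c, hc⟩ := hodd; obtain ⟨c', hc'⟩ := hoa; exact ⟨c - c', by omega⟩
        refine ⟨(Z a ++ [true], false :: true :: Z b), ⟨by simp, by simp,
          isUlam_Z_true a, (isUlam_01Z b).mpr heb, Z_true_ne_01Z ?_, by simp⟩, ?_⟩
        · rintro ⟨rfl, rfl⟩; omega
        · rintro p ⟨g1, g2, g3, g4, g5, g6⟩
          rcases classify_g g1 g2 g3 g4 g6 with ⟨ha', hp'⟩ | hp' | hp' | ⟨hb', hp', hul⟩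
          · rw [hp'] at g4
            have := ((IH (k-1) (by omega) (a-1) b (by omega)).mp g4).1
            obtain ⟨c, hc⟩ := this; obtain ⟨c', hc'⟩ := hodd; omega
          · rw [hp']
          · rw [hp'] at g3
            have := (isUlam_Z10 a).mp g3
            obtain ⟨c, hc⟩ := this; obtain ⟨c', hc'⟩ := hoa; omega
          · have := ((IH (k-1) (by omega) a (b-1) (by omega)).mp hul).1
            obtain ⟨c, hc⟩ := this; obtain ⟨c', hc'⟩ := hodd; omega
lemma isUlam_ttffO (b : ℕ) : IsUlam (true :: true :: false :: false :: O b) ↔ Odd b := by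
  have hf : (false :: false :: true :: true :: Z b : List Bool).map Bool.not =
      true :: true :: false :: false :: O b := by simp
  rw [← hf, isUlam_flip_iff]
  have : (false :: false :: true :: true :: Z b : List Bool) = Z 2 ++ true :: true :: Z b := by
    simp [List.replicate_succ]
  rw [this, isUlam_f (2 + b) 2 b rfl, add_comm, odd_add_two']

lemma isUlam_tffO (b : ℕ) : IsUlam (true :: false :: false :: O b) ↔ Even b := by
  have hf : (false :: true :: true :: Z b : List Bool).map Bool.not =
      true :: false :: false :: O b := by simp
  rw [← hf, isUlam_flip_iff]
  have : (false :: true :: true :: Z b : List Bool) = Z 1 ++ true :: true :: Z b := by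
    simp [List.replicate_succ]
  rw [this, isUlam_f (1 + b) 1 b rfl, add_comm, Nat.odd_add_one, Nat.not_odd_iff_even]

lemma isUlam_ffO (b : ℕ) : IsUlam (false :: false :: O b) ↔ Odd b := by
  have hf : (true :: true :: Z b : List Bool).map Bool.not =
      false :: false :: O b := by simp
  rw [← hf, isUlam_flip_iff]
  have : (true :: true :: Z b : List Bool) = Z 0 ++ true :: true :: Z b := by simp
  rw [this, isUlam_f b 0 b (by omega)]

lemma isUlam_ftt : IsUlam [false, true, true] := by
  have := (isUlam_f 1 1 0 rfl).mpr ⟨0, rfl⟩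
  simpa [List.replicate_succ] using this

lemma not_isUlam_fttf : ¬ IsUlam [false, true, true, false] := by
  intro h
  have : IsUlam (Z 1 ++ true :: true :: Z 1) := by
    simpa [List.replicate_succ] using h
  obtain ⟨c, hc⟩ := (isUlam_f 2 1 1 rfl).mp this
  omega

lemma isUlam_ft : IsUlam [false, true] := by
  have := (isUlam_01Z 0).mpr Even.zero
  simpa using this

/-- Classification of candidate decompositions of `0 1 1 0 0 1^b`. -/
lemma classify_m {b : ℕ} {p : List Bool × List Bool} (h1 : p.1 ≠ []) (h2 : p.2 ≠ [])
    (h3 : IsUlam p.1) (h4 : IsUlam p.2)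
    (h6 : p.1 ++ p.2 = [false, true, true, false, false] ++ O b) :
    (p = ([false], true :: true :: false :: false :: O b)) ∨
    (p = ([false, true], true :: false :: false :: O b)) ∨
    (p = ([false, true, true], false :: false :: O b)) ∨
    (p = ([false, true, true, false], false :: O b) ∧ IsUlam [false, true, true, false]) ∨
    (1 ≤ b ∧ p = ([false, true, true, false, false] ++ O (b-1), [true]) ∧
      IsUlam ([false, true, true, false, false] ++ O (b-1))) := by
  have h6' : p.1 ++ p.2 = Z 1 ++ true :: (true :: false :: false :: O b) := by
    simpa [List.replicate_succ] using h6
  rcases split_Z h6' with ⟨i, j, hij, hi, hj⟩ | ⟨s, hs1, hs2⟩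
  · have : 1 ≤ i := one_le_of_Z hi h1
    have hi1 : i = 1 := by omega
    have hj0 : j = 0 := by omega
    subst hi1; subst hj0
    exact Or.inl (Prod.ext (by simpa using hi) (by simpa using hj))
  · rcases cons_split hs2.symm with ⟨hsnil, hp2⟩ | ⟨s₂, hs₂, hrest⟩
    · subst hsnil
      refine Or.inr (Or.inl (Prod.ext ?_ hp2))
      rw [hs1]
      simp [List.replicate_succ]
    · rcases cons_split hrest with ⟨hs₂nil, hp2⟩ | ⟨s₃, hs₃, hrest₂⟩
      · subst hs₂nil
        refine Or.inr (Or.inr (Or.inl (Prod.ext ?_ hp2)))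
        rw [hs1, hs₂]
        simp [List.replicate_succ]
      · rcases cons_split hrest₂ with ⟨hs₃nil, hp2⟩ | ⟨s₄, hs₄, hrest₃⟩
        · subst hs₃nil
          have hp1 : p.1 = [false, true, true, false] := by
            rw [hs1, hs₂, hs₃]
            simp [List.replicate_succ]
          exact Or.inr (Or.inr (Or.inr (Or.inl ⟨Prod.ext hp1 hp2, hp1 ▸ h3⟩)))
        · obtain ⟨hsz, hp2, hb⟩ := append_eq_repl hrest₃
          have hl1 : p.2.length = 1 := (isUlam_O_iff _).mp (by
            rw [show (O p.2.length : List Bool) = p.2 from hp2.symm]; exact h4)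
          have hsl : s₄.length = b - 1 := by omega
          have hp1 : p.1 = [false, true, true, false, false] ++ O (b-1) := by
            rw [hs1, hs₂, hs₃, hs₄, hsz, hsl]
            simp [List.replicate_succ]
          refine Or.inr (Or.inr (Or.inr (Or.inr ⟨by omega,
            Prod.ext hp1 (by rw [hp2, hl1]; rfl), hp1 ▸ h3⟩)))

lemma isUlam_m : ∀ b : ℕ, IsUlam ([false, true, true, false, false] ++ O b) ↔ Even b := by
  intro b
  induction b using Nat.strong_induction_on with
  | _ b IH =>
    have hlen : 2 ≤ ([false, true, true, false, false] ++ O b).length := by simp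
    constructor
    · intro h
      by_contra hodd
      have hob : Odd b := Nat.odd_iff.mpr (by
        rcases Nat.even_or_odd b with he | ho
        · exact absurd he hodd
        · exact Nat.odd_iff.mp ho)
      rw [isUlam_iff_two hlen] at h
      obtain ⟨p, hp, hu⟩ := h
      have e1 : (([false] : List Bool), (true :: true :: false :: false :: O b : List Bool))
          = p := by
        apply hu
        refine ⟨by simp, by simp, isUlam_false, (isUlam_ttffO b).mpr hob, by simp, by simp⟩
      have e2 : (([false, true, true] : List Bool), (false :: false :: O b : List Bool))
          = p := by
        apply hu
        refine ⟨by simp, by simp, isUlam_ftt, (isUlam_ffO b).mpr hob, by simp, by simp⟩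
      rw [← e2] at e1
      have := congrArg (fun q => q.1.length) e1
      simp at this
    · intro heb
      rw [isUlam_iff_two hlen]
      refine ⟨([false, true], true :: false :: false :: O b), ⟨by simp, by simp,
        isUlam_ft, (isUlam_tffO b).mpr heb, by simp, by simp⟩, ?_⟩
      rintro p ⟨g1, g2, g3, g4, g5, g6⟩
      rcases classify_m g1 g2 g3 g4 g6 with hp' | hp' | hp' | ⟨hp', hul⟩ | ⟨hb1, hp', hul⟩
      · rw [hp'] at g4
        have := (isUlam_ttffO b).mp g4
        obtain ⟨c, hc⟩ := this; obtain ⟨c', hc'⟩ := heb; omega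
      · rw [hp']
      · rw [hp'] at g4
        have := (isUlam_ffO b).mp g4
        obtain ⟨c, hc⟩ := this; obtain ⟨c', hc'⟩ := heb; omega
      · exact absurd hul not_isUlam_fttf
      · have := (IH (b-1) (by omega)).mp hul
        obtain ⟨c, hc⟩ := this; obtain ⟨c', hc'⟩ := heb; omega
lemma bool_not_inj : Function.Injective Bool.not := by
  intro x y h; cases x <;> cases y <;> simp_all

lemma minj : Function.Injective (List.map Bool.not) :=
  List.map_injective_iff.mpr bool_not_inj

lemma countT_not (w : List Bool) : (w.map Bool.not).count true + w.count true = w.length := by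
  induction w with
  | nil => simp
  | cons x t IH =>
    cases x <;> simp [List.count_cons] <;> omega

lemma countT_Z (a : ℕ) : (Z a).count true = 0 := by
  simp [List.count_replicate]

lemma countT_O (a : ℕ) : (O a).count true = a := by
  simp [List.count_replicate]

lemma countT_w1 (a b : ℕ) : (Z a ++ true :: Z b).count true = 1 := by
  simp [List.count_append, List.count_cons, countT_Z]

lemma countT_w2 (a b : ℕ) : (Z a ++ true :: true :: Z b).count true = 2 := by
  simp [List.count_append, List.count_cons, countT_Z]

lemma countT_w3 (a b : ℕ) : (Z a ++ true :: false :: true :: Z b).count true = 2 := by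
  simp [List.count_append, List.count_cons, countT_Z]

lemma countT_wm (b : ℕ) : (([false, true, true, false, false] ++ O b).count true) = b + 2 := by
  simp [List.count_append, List.count_cons, countT_O]

lemma disj_of_countT {A B : Finset (List Bool)} {c₁ c₂ : ℕ} (h : c₁ ≠ c₂)
    (hA : ∀ w ∈ A, w.count true = c₁) (hB : ∀ w ∈ B, w.count true = c₂) : Disjoint A B :=
  Finset.disjoint_left.mpr fun w hwA hwB => h (by rw [← hA w hwA, hB w hwB])

lemma countT_image_not {F : Finset (List Bool)} {c n : ℕ}
    (hc : ∀ w ∈ F, w.count true = c) (hl : ∀ w ∈ F, w.length = n) :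
    ∀ w ∈ F.image (List.map Bool.not), w.count true = n - c := by
  intro w hw
  obtain ⟨v, hv, rfl⟩ := Finset.mem_image.mp hw
  have h1 := countT_not v
  have h2 := hc v hv
  have h3 := hl v hv
  omega

lemma image_not_subset {F : Finset (List Bool)} {n : ℕ}
    (h : ∀ w ∈ F, w.length = n ∧ IsUlam w) :
    ∀ w ∈ F.image (List.map Bool.not), w.length = n ∧ IsUlam w := by
  intro w hw
  obtain ⟨v, hv, rfl⟩ := Finset.mem_image.mp hw
  obtain ⟨h1, h2⟩ := h v hv
  exact ⟨by simpa using h1, isUlam_flip_iff.mpr h2⟩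

lemma len_image_not {F : Finset (List Bool)} {n : ℕ}
    (hl : ∀ w ∈ F, w.length = n) :
    ∀ w ∈ F.image (List.map Bool.not), w.length = n := by
  intro w hw
  obtain ⟨v, hv, rfl⟩ := Finset.mem_image.mp hw
  simpa using hl v hv

theorem ulam_linear_lower_bound (n : ℕ) (hn : 6 ≤ n) :
    2 * n + 4 ≤ {w : List Bool | w.length = n ∧ IsUlam w}.ncard := by
  have hTfin : {w : List Bool | w.length = n ∧ IsUlam w}.Finite :=
    (List.finite_length_eq Bool n).subset (fun w hw => hw.1)
  suffices h : ∃ S : Finset (List Bool), S.card = 2*n+4 ∧ ∀ w ∈ S, w.length = n ∧ IsUlam w by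
    obtain ⟨S, hcard, hsub⟩ := h
    have hS : ↑S ⊆ {w : List Bool | w.length = n ∧ IsUlam w} := fun w hw => hsub w (by simpa using hw)
    calc 2*n+4 = S.card := hcard.symm
    _ = (↑S : Set (List Bool)).ncard := (Set.ncard_coe_finset S).symm
    _ ≤ _ := Set.ncard_le_ncard hS hTfin
  rcases Nat.even_or_odd n with he | ho
  · -- n even
    obtain ⟨m, hm⟩ := he
    set A : Finset (List Bool) :=
      ({0, 1, n-2, n-1} : Finset ℕ).image (fun a => Z a ++ true :: Z (n-1-a)) with hA
    set B : Finset (List Bool) :=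
      (Finset.range (n-2)).image (fun a => Z a ++ true :: false :: true :: Z (n-3-a)) with hB
    set A' : Finset (List Bool) := A.image (List.map Bool.not) with hA'
    set B' : Finset (List Bool) := B.image (List.map Bool.not) with hB'
    have hAgood : ∀ w ∈ A, w.length = n ∧ IsUlam w := by
      intro w hw
      obtain ⟨a, ha, rfl⟩ := Finset.mem_image.mp hw
      simp only [Finset.mem_insert, Finset.mem_singleton] at ha
      constructor
      · simp
        omega
      · rcases ha with rfl | rfl | rfl | rfl
        · simpa using isUlam_true_Z (n-1)
        · have := (isUlam_01Z (n-2)).mpr ⟨m - 1, by omega⟩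
          have h2 : n - 1 - 1 = n - 2 := by omega
          rw [h2]
          simpa [List.replicate_succ] using this
        · have := (isUlam_Z10 (n-2)).mpr ⟨m - 1, by omega⟩
          have h2 : n - 1 - (n-2) = 1 := by omega
          rw [h2]
          simpa using this
        · have h2 : n - 1 - (n-1) = 0 := by omega
          rw [h2]
          simpa using isUlam_Z_true (n-1)
    have hBgood : ∀ w ∈ B, w.length = n ∧ IsUlam w := by
      intro w hw
      obtain ⟨a, ha, rfl⟩ := Finset.mem_image.mp hw
      rw [Finset.mem_range] at ha
      constructor
      · simp
        omega
      · exact (isUlam_g (n-3) a (n-3-a) (by omega)).mpr ⟨⟨m - 2, by omega⟩, by omega⟩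
    have hA'good := image_not_subset hAgood
    have hB'good := image_not_subset hBgood
    have hAcount : ∀ w ∈ A, w.count true = 1 := by
      intro w hw
      obtain ⟨a, ha, rfl⟩ := Finset.mem_image.mp hw
      exact countT_w1 _ _
    have hBcount : ∀ w ∈ B, w.count true = 2 := by
      intro w hw
      obtain ⟨a, ha, rfl⟩ := Finset.mem_image.mp hw
      exact countT_w3 _ _
    have hA'count : ∀ w ∈ A', w.count true = n - 1 :=
      countT_image_not hAcount (fun w hw => (hAgood w hw).1)
    have hB'count : ∀ w ∈ B', w.count true = n - 2 :=
      countT_image_not hBcount (fun w hw => (hBgood w hw).1)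
    have hAcard : A.card = 4 := by
      rw [hA, Finset.card_image_of_injOn (fun a _ a' _ h => (Z_cancel _ _ _ _ h).1)]
      rw [Finset.card_insert_of_notMem (by simp; omega),
        Finset.card_insert_of_notMem (by simp; omega),
        Finset.card_insert_of_notMem (by simp; omega), Finset.card_singleton]
    have hBcard : B.card = n - 2 := by
      rw [hB, Finset.card_image_of_injOn (fun a _ a' _ h => (Z_cancel _ _ _ _ h).1),
        Finset.card_range]
    have hA'card : A'.card = 4 := by
      rw [hA', Finset.card_image_of_injective _ minj, hAcard]
    have hB'card : B'.card = n - 2 := by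
      rw [hB', Finset.card_image_of_injective _ minj, hBcard]
    refine ⟨A ∪ (B ∪ (A' ∪ B')), ?_, ?_⟩
    · have d1 : Disjoint A (B ∪ (A' ∪ B')) := by
        refine Finset.disjoint_union_right.mpr ⟨disj_of_countT (by omega) hAcount hBcount,
          Finset.disjoint_union_right.mpr ⟨disj_of_countT (by omega) hAcount hA'count,
          disj_of_countT (by omega) hAcount hB'count⟩⟩
      have d2 : Disjoint B (A' ∪ B') := by
        refine Finset.disjoint_union_right.mpr ⟨disj_of_countT (by omega) hBcount hA'count,
          disj_of_countT (by omega) hBcount hB'count⟩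
      have d3 : Disjoint A' B' := disj_of_countT (by omega) hA'count hB'count
      rw [Finset.card_union_of_disjoint d1, Finset.card_union_of_disjoint d2,
        Finset.card_union_of_disjoint d3, hAcard, hBcard, hA'card, hB'card]
      omega
    · intro w hw
      simp only [Finset.mem_union] at hw
      rcases hw with hw | hw | hw | hw
      · exact hAgood w hw
      · exact hBgood w hw
      · exact hA'good w hw
      · exact hB'good w hw
  · -- n odd
    obtain ⟨m, hm⟩ := ho
    set A : Finset (List Bool) :=
      ({0, n-1} : Finset ℕ).image (fun a => Z a ++ true :: Z (n-1-a)) with hA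
    set F : Finset (List Bool) :=
      (Finset.range (n-1)).image (fun a => Z a ++ true :: true :: Z (n-2-a)) with hF
    set M : Finset (List Bool) := {[false, true, true, false, false] ++ O (n-5)} with hM
    set A' : Finset (List Bool) := A.image (List.map Bool.not) with hA'
    set F' : Finset (List Bool) := F.image (List.map Bool.not) with hF'
    set M' : Finset (List Bool) := M.image (List.map Bool.not) with hM'
    have hAgood : ∀ w ∈ A, w.length = n ∧ IsUlam w := by
      intro w hw
      obtain ⟨a, ha, rfl⟩ := Finset.mem_image.mp hw
      simp only [Finset.mem_insert, Finset.mem_singleton] at ha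
      constructor
      · simp
        omega
      · rcases ha with rfl | rfl
        · simpa using isUlam_true_Z (n-1)
        · have h2 : n - 1 - (n-1) = 0 := by omega
          rw [h2]
          simpa using isUlam_Z_true (n-1)
    have hFgood : ∀ w ∈ F, w.length = n ∧ IsUlam w := by
      intro w hw
      obtain ⟨a, ha, rfl⟩ := Finset.mem_image.mp hw
      rw [Finset.mem_range] at ha
      constructor
      · simp
        omega
      · exact (isUlam_f (n-2) a (n-2-a) (by omega)).mpr ⟨m - 1, by omega⟩
    have hMgood : ∀ w ∈ M, w.length = n ∧ IsUlam w := by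
      intro w hw
      rw [hM, Finset.mem_singleton] at hw
      subst hw
      constructor
      · simp
        omega
      · exact (isUlam_m (n-5)).mpr ⟨m - 2, by omega⟩
    have hA'good := image_not_subset hAgood
    have hF'good := image_not_subset hFgood
    have hM'good := image_not_subset hMgood
    have hAcount : ∀ w ∈ A, w.count true = 1 := by
      intro w hw
      obtain ⟨a, ha, rfl⟩ := Finset.mem_image.mp hw
      exact countT_w1 _ _
    have hFcount : ∀ w ∈ F, w.count true = 2 := by
      intro w hw
      obtain ⟨a, ha, rfl⟩ := Finset.mem_image.mp hw
      exact countT_w2 _ _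
    have hMcount : ∀ w ∈ M, w.count true = n - 3 := by
      intro w hw
      rw [hM, Finset.mem_singleton] at hw
      subst hw
      rw [countT_wm]
      omega
    have hA'count : ∀ w ∈ A', w.count true = n - 1 :=
      countT_image_not hAcount (fun w hw => (hAgood w hw).1)
    have hF'count : ∀ w ∈ F', w.count true = n - 2 :=
      countT_image_not hFcount (fun w hw => (hFgood w hw).1)
    have hM'count : ∀ w ∈ M', w.count true = n - (n - 3) :=
      countT_image_not hMcount (fun w hw => (hMgood w hw).1)
    have hM'count3 : ∀ w ∈ M', w.count true = 3 := by
      intro w hw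
      rw [hM'count w hw]
      omega
    have hAcard : A.card = 2 := by
      rw [hA, Finset.card_image_of_injOn (fun a _ a' _ h => (Z_cancel _ _ _ _ h).1)]
      rw [Finset.card_insert_of_notMem (by simp; omega), Finset.card_singleton]
    have hFcard : F.card = n - 1 := by
      rw [hF, Finset.card_image_of_injOn (fun a _ a' _ h => (Z_cancel _ _ _ _ h).1),
        Finset.card_range]
    have hMcard : M.card = 1 := by rw [hM, Finset.card_singleton]
    have hA'card : A'.card = 2 := by
      rw [hA', Finset.card_image_of_injective _ minj, hAcard]
    have hF'card : F'.card = n - 1 := by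
      rw [hF', Finset.card_image_of_injective _ minj, hFcard]
    have hM'card : M'.card = 1 := by
      rw [hM', Finset.card_image_of_injective _ minj, hMcard]
    have hn7 : 7 ≤ n := by omega
    refine ⟨A ∪ (F ∪ (M ∪ (A' ∪ (F' ∪ M')))), ?_, ?_⟩
    · have d1 : Disjoint A (F ∪ (M ∪ (A' ∪ (F' ∪ M')))) := by
        refine Finset.disjoint_union_right.mpr ⟨disj_of_countT (by omega) hAcount hFcount,
          Finset.disjoint_union_right.mpr ⟨disj_of_countT (by omega) hAcount hMcount,
          Finset.disjoint_union_right.mpr ⟨disj_of_countT (by omega) hAcount hA'count,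
          Finset.disjoint_union_right.mpr ⟨disj_of_countT (by omega) hAcount hF'count,
          disj_of_countT (by omega) hAcount hM'count3⟩⟩⟩⟩
      have d2 : Disjoint F (M ∪ (A' ∪ (F' ∪ M'))) := by
        refine Finset.disjoint_union_right.mpr ⟨disj_of_countT (by omega) hFcount hMcount,
          Finset.disjoint_union_right.mpr ⟨disj_of_countT (by omega) hFcount hA'count,
          Finset.disjoint_union_right.mpr ⟨disj_of_countT (by omega) hFcount hF'count,
          disj_of_countT (by omega) hFcount hM'count3⟩⟩⟩
      have d3 : Disjoint M (A' ∪ (F' ∪ M')) := by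
        refine Finset.disjoint_union_right.mpr ⟨disj_of_countT (by omega) hMcount hA'count,
          Finset.disjoint_union_right.mpr ⟨disj_of_countT (by omega) hMcount hF'count,
          disj_of_countT (by omega) hMcount hM'count3⟩⟩
      have d4 : Disjoint A' (F' ∪ M') := by
        refine Finset.disjoint_union_right.mpr ⟨disj_of_countT (by omega) hA'count hF'count,
          disj_of_countT (by omega) hA'count hM'count3⟩
      have d5 : Disjoint F' M' := disj_of_countT (by omega) hF'count hM'count3
      rw [Finset.card_union_of_disjoint d1, Finset.card_union_of_disjoint d2,
        Finset.card_union_of_disjoint d3, Finset.card_union_of_disjoint d4,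
        Finset.card_union_of_disjoint d5, hAcard, hFcard, hMcard, hA'card, hF'card, hM'card]
      omega
    · intro w hw
      simp only [Finset.mem_union] at hw
      rcases hw with hw | hw | hw | hw | hw | hw
      · exact hAgood w hw
      · exact hFgood w hw
      · exact hMgood w hw
      · exact hA'good w hw
      · exact hF'good w hw
      · exact hM'good w hw
end
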